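/- arXiv:2003.12384 — 7 statements merged into one kernel-verified Lean document; each statement's English description precedes it below -/
import Mathlib

section
/- (Theorem 3.1, lower bound.) Let k ≥ 3 and m ≥ 2 be integers and n = m(k − 1) + 1. Let (d₁, …, dₙ) be any n-tuple of positive integers with Σᵢ dᵢ = km, and set δᵢ = dᵢ(k − 1) and I_δ = log₂(k(k−1)m) − (1/(k(k−1)m))·Σᵢ δᵢ·log₂ δᵢ. Then I_δ ≥ log₂(k(k−1)m) − (1/(k(k−1)m))·[(mk − m)·log₂(mk − m) + (n − 1)(k − 1)·log₂(k − 1)], with equality if and only if (d₁, …, dₙ) is a permutation of (m, 1, 1, …, 1). -/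
open Real Finset

private noncomputable def Ffun (t : ℝ) : ℝ := t * Real.logb 2 t

private lemma g_add_lt {x y : ℝ} (hx : 0 < x) (hy : 0 < y) :
    (1+x) * Real.log (1+x) + (1+y) * Real.log (1+y) < (1+x+y) * Real.log (1+x+y) := by
  have hs : 0 < x + y := by linarith
  have h1 : (1:ℝ) + x = (y/(x+y)) • (1:ℝ) + (x/(x+y)) • (1+x+y) := by
    simp only [smul_eq_mul]; field_simp; ring
  have h2 : (1:ℝ) + y = (x/(x+y)) • (1:ℝ) + (y/(x+y)) • (1+x+y) := by
    simp only [smul_eq_mul]; field_simp; ring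
  have hmem1 : (1:ℝ) ∈ Set.Ici (0:ℝ) := by norm_num
  have hmem2 : (1+x+y) ∈ Set.Ici (0:ℝ) := by simp; linarith
  have hne : (1:ℝ) ≠ 1+x+y := ne_of_lt (by linarith)
  have hl : 0 < y/(x+y) := by positivity
  have hr : 0 < x/(x+y) := by positivity
  have hsum1 : y/(x+y) + x/(x+y) = 1 := by rw [← add_div, add_comm y x, div_self hs.ne']
  have hsum2 : x/(x+y) + y/(x+y) = 1 := by rw [← add_div, div_self hs.ne']
  have c1 := Real.strictConvexOn_mul_log.2 hmem1 hmem2 hne hl hr hsum1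
  have c2 := Real.convexOn_mul_log.2 hmem1 hmem2 hr.le hl.le hsum2
  rw [← h1] at c1
  rw [← h2] at c2
  simp only [Real.log_one, mul_zero, one_mul, smul_eq_mul, mul_zero, zero_add] at c1 c2
  have key : x/(x+y) * ((1+x+y) * Real.log (1+x+y)) + y/(x+y) * ((1+x+y) * Real.log (1+x+y))
      = (1+x+y) * Real.log (1+x+y) := by rw [← add_mul, hsum2, one_mul]
  linarith

private lemma F_add_lt {x y : ℝ} (hx : 0 < x) (hy : 0 < y) :
    Ffun (1+x) + Ffun (1+y) < Ffun (1+x+y) := by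
  have hg := g_add_lt hx hy
  have hL : (0:ℝ) < (Real.log 2)⁻¹ := by
    have : (0:ℝ) < Real.log 2 := Real.log_pos (by norm_num)
    positivity
  have h' := mul_lt_mul_of_pos_right hg hL
  simp only [Ffun, Real.logb, div_eq_mul_inv]
  ring_nf at h' ⊢
  linarith

private lemma F_add_le {x y : ℝ} (hx : 0 ≤ x) (hy : 0 ≤ y) :
    Ffun (1+x) + Ffun (1+y) ≤ Ffun (1+x+y) := by
  rcases eq_or_lt_of_le hx with h | hx'
  · rw [← h]; simp [Ffun]
  rcases eq_or_lt_of_le hy with h | hy'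
  · rw [← h]; simp [Ffun]
  exact (F_add_lt hx' hy').le

private lemma F_sum_le {ι : Type*} (s : Finset ι) (e : ι → ℝ) (he : ∀ i ∈ s, 0 ≤ e i) :
    ∑ i ∈ s, Ffun (1 + e i) ≤ Ffun (1 + ∑ i ∈ s, e i) := by
  classical
  induction s using Finset.induction_on with
  | empty => simp [Ffun]
  | @insert a t ha ih =>
    rw [Finset.sum_insert ha, Finset.sum_insert ha]
    have hEt : 0 ≤ ∑ i ∈ t, e i := Finset.sum_nonneg fun i hi => he i (Finset.mem_insert_of_mem hi)
    have h1 : ∑ i ∈ t, Ffun (1 + e i) ≤ Ffun (1 + ∑ i ∈ t, e i) :=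
      ih fun i hi => he i (Finset.mem_insert_of_mem hi)
    have h2 := F_add_le (he a (Finset.mem_insert_self a t)) hEt
    calc Ffun (1 + e a) + ∑ i ∈ t, Ffun (1 + e i)
        ≤ Ffun (1 + e a) + Ffun (1 + ∑ i ∈ t, e i) := by linarith
      _ ≤ Ffun (1 + e a + ∑ i ∈ t, e i) := h2
      _ = Ffun (1 + (e a + ∑ i ∈ t, e i)) := by ring_nf

private lemma F_sum_lt {ι : Type*} (s : Finset ι) (e : ι → ℝ) (he : ∀ i ∈ s, 0 ≤ e i)
    {i j : ι} (hi : i ∈ s) (hj : j ∈ s) (hij : i ≠ j) (hei : 0 < e i) (hej : 0 < e j) :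
    ∑ x ∈ s, Ffun (1 + e x) < Ffun (1 + ∑ x ∈ s, e x) := by
  classical
  rw [← Finset.add_sum_erase _ (fun x => Ffun (1 + e x)) hi, ← Finset.add_sum_erase _ e hi]
  have hjmem : j ∈ s.erase i := Finset.mem_erase.2 ⟨hij.symm, hj⟩
  have hE' : 0 < ∑ x ∈ s.erase i, e x :=
    lt_of_lt_of_le hej (Finset.single_le_sum (fun x hx => he x (Finset.mem_of_mem_erase hx)) hjmem)
  have h1 : ∑ x ∈ s.erase i, Ffun (1 + e x) ≤ Ffun (1 + ∑ x ∈ s.erase i, e x) :=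
    F_sum_le _ _ fun x hx => he x (Finset.mem_of_mem_erase hx)
  have h2 := F_add_lt hei hE'
  calc Ffun (1 + e i) + ∑ x ∈ s.erase i, Ffun (1 + e x)
      ≤ Ffun (1 + e i) + Ffun (1 + ∑ x ∈ s.erase i, e x) := by linarith
    _ < Ffun (1 + e i + ∑ x ∈ s.erase i, e x) := h2
    _ = Ffun (1 + (e i + ∑ x ∈ s.erase i, e x)) := by ring_nf



/-- Theorem 3.1, lower bound: among `k`-uniform hypertree degree sequences
(`n = m(k-1)+1` positive integers `dᵢ` with `Σ dᵢ = km`, Laplacian degrees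
`δᵢ = dᵢ(k-1)`), the entropy `I_δ` is at least the hyperstar value, with equality
iff `(d₁, …, dₙ)` is a permutation of `(m, 1, …, 1)`. -/
theorem stmt_8 (k m n : ℕ) (hk : 3 ≤ k) (hm : 2 ≤ m) (hn : n = m * (k - 1) + 1)
    (d : Fin n → ℕ) (hd : ∀ i, 1 ≤ d i) (hsum : ∑ i, d i = k * m)
    (δ : Fin n → ℝ) (hδ : ∀ i, δ i = (d i : ℝ) * ((k : ℝ) - 1))
    (Iδ : ℝ)
    (hI : Iδ = Real.logb 2 ((k : ℝ) * ((k : ℝ) - 1) * (m : ℝ)) -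
      (1 / ((k : ℝ) * ((k : ℝ) - 1) * (m : ℝ))) * ∑ i, δ i * Real.logb 2 (δ i))
    (B : ℝ)
    (hB : B = Real.logb 2 ((k : ℝ) * ((k : ℝ) - 1) * (m : ℝ)) -
      (1 / ((k : ℝ) * ((k : ℝ) - 1) * (m : ℝ))) *
        (((m : ℝ) * (k : ℝ) - (m : ℝ)) * Real.logb 2 ((m : ℝ) * (k : ℝ) - (m : ℝ)) +
          ((n : ℝ) - 1) * ((k : ℝ) - 1) * Real.logb 2 ((k : ℝ) - 1))) :
    B ≤ Iδ ∧
    (Iδ = B ↔ ∃ σ : Equiv.Perm (Fin n), ∀ i, d i = if ((σ i : Fin n) : ℕ) = 0 then m else 1) := by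
  classical
  -- basic numeric facts
  have hk1 : (1:ℕ) ≤ k := by omega
  have hkR : (3:ℝ) ≤ (k:ℝ) := by exact_mod_cast hk
  have hmR : (2:ℝ) ≤ (m:ℝ) := by exact_mod_cast hm
  have hKpos : (0:ℝ) < (k:ℝ) - 1 := by linarith
  have hKne : ((k:ℝ) - 1) ≠ 0 := ne_of_gt hKpos
  have hCpos : (0:ℝ) < (k:ℝ) * ((k:ℝ) - 1) * (m:ℝ) :=
    mul_pos (mul_pos (by linarith : (0:ℝ) < (k:ℝ)) hKpos) (by linarith : (0:ℝ) < (m:ℝ))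
  have hnR : (n:ℝ) = (m:ℝ) * ((k:ℝ) - 1) + 1 := by
    rw [hn]; push_cast [Nat.cast_sub hk1]; ring
  have hsumR : ∑ i, (d i : ℝ) = (k:ℝ) * (m:ℝ) := by exact_mod_cast congrArg (Nat.cast (R := ℝ)) hsum
  set D : ℝ := ∑ i, (d i : ℝ) * Real.logb 2 (d i) with hD
  -- rewrite the δ-sum
  have hT : ∑ i, δ i * Real.logb 2 (δ i)
      = ((k:ℝ) - 1) * D + ((k:ℝ) - 1) * ((k:ℝ) * (m:ℝ)) * Real.logb 2 ((k:ℝ) - 1) := by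
    have : ∀ i, δ i * Real.logb 2 (δ i)
        = ((k:ℝ) - 1) * ((d i : ℝ) * Real.logb 2 (d i))
          + ((k:ℝ) - 1) * Real.logb 2 ((k:ℝ) - 1) * (d i : ℝ) := by
      intro i
      have hdne : ((d i : ℝ)) ≠ 0 := by
        have := hd i; positivity
      rw [hδ i, Real.logb_mul hdne hKne]; ring
    rw [Finset.sum_congr rfl fun i _ => this i, Finset.sum_add_distrib, ← Finset.mul_sum,
      ← Finset.mul_sum, hsumR, hD]
    ring
  -- rewrite the star bracket
  have hS : ((m : ℝ) * (k : ℝ) - (m : ℝ)) * Real.logb 2 ((m : ℝ) * (k : ℝ) - (m : ℝ)) +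
        ((n : ℝ) - 1) * ((k : ℝ) - 1) * Real.logb 2 ((k : ℝ) - 1)
      = ((k:ℝ) - 1) * ((m:ℝ) * Real.logb 2 (m:ℝ))
        + ((k:ℝ) - 1) * ((k:ℝ) * (m:ℝ)) * Real.logb 2 ((k:ℝ) - 1) := by
    have hmne : ((m:ℝ)) ≠ 0 := by positivity
    have h1 : (m:ℝ) * (k:ℝ) - (m:ℝ) = (m:ℝ) * ((k:ℝ) - 1) := by ring
    rw [h1, Real.logb_mul hmne hKne, hnR]
    ring
  -- the difference formula
  have hIB : Iδ - B = (((k:ℝ) - 1) / ((k:ℝ) * ((k:ℝ) - 1) * (m:ℝ)))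
      * ((m:ℝ) * Real.logb 2 (m:ℝ) - D) := by
    rw [hI, hB, hT, hS]
    field_simp
    ring
  have hcpos : (0:ℝ) < ((k:ℝ) - 1) / ((k:ℝ) * ((k:ℝ) - 1) * (m:ℝ)) := by positivity
  -- express D via Ffun
  have hflip : ∀ i : Fin n, (d i : ℝ) * Real.logb 2 (d i) = Ffun (1 + ((d i : ℝ) - 1)) := by
    intro i; simp [Ffun]
  have he0 : ∀ i : Fin n, (0:ℝ) ≤ (d i : ℝ) - 1 := by
    intro i; have := hd i
    have : (1:ℝ) ≤ (d i : ℝ) := by exact_mod_cast this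
    linarith
  have hesum : ∑ i : Fin n, ((d i : ℝ) - 1) = (m:ℝ) - 1 := by
    rw [Finset.sum_sub_distrib, hsumR]
    simp only [Finset.sum_const, Finset.card_univ, Fintype.card_fin, nsmul_eq_mul, mul_one]
    rw [hnR]; ring
  have hDF : D = ∑ i : Fin n, Ffun (1 + ((d i : ℝ) - 1)) := by
    rw [hD]; exact Finset.sum_congr rfl fun i _ => hflip i
  have hFm : Ffun (1 + ((m:ℝ) - 1)) = (m:ℝ) * Real.logb 2 (m:ℝ) := by simp [Ffun]
  -- main inequality
  have hmain : D ≤ (m:ℝ) * Real.logb 2 (m:ℝ) := by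
    rw [hDF, ← hFm]
    have := F_sum_le Finset.univ (fun i => (d i : ℝ) - 1) (fun i _ => he0 i)
    rwa [hesum] at this
  -- identity used for nat arithmetic
  have hmk : m * (k - 1) + m = m * k := by
    calc m * (k - 1) + m = m * (k - 1 + 1) := by ring
      _ = m * k := by rw [Nat.sub_add_cancel hk1]
  have hcomm : k * m = m * k := Nat.mul_comm k m
  have hn1 : n - 1 = m * (k - 1) := by omega
  constructor
  · nlinarith [mul_nonneg hcpos.le (sub_nonneg.2 hmain)]
  constructor
  · -- equality implies permutation
    intro hEq
    have hzero : ((m:ℝ) * Real.logb 2 (m:ℝ) - D) = 0 := by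
      have : (((k:ℝ) - 1) / ((k:ℝ) * ((k:ℝ) - 1) * (m:ℝ)))
          * ((m:ℝ) * Real.logb 2 (m:ℝ) - D) = 0 := by rw [← hIB, hEq]; ring
      rcases mul_eq_zero.1 this with h | h
      · exact absurd h (ne_of_gt hcpos)
      · exact h
    have hDeq : D = (m:ℝ) * Real.logb 2 (m:ℝ) := by linarith
    -- at most one index with d ≥ 2
    have huniq : ∀ i j : Fin n, i ≠ j → 2 ≤ d i → 2 ≤ d j → False := by
      intro i j hij h2i h2j
      have hei : (0:ℝ) < (d i : ℝ) - 1 := by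
        have : (2:ℝ) ≤ (d i : ℝ) := by exact_mod_cast h2i
        linarith
      have hej : (0:ℝ) < (d j : ℝ) - 1 := by
        have : (2:ℝ) ≤ (d j : ℝ) := by exact_mod_cast h2j
        linarith
      have := F_sum_lt Finset.univ (fun i => (d i : ℝ) - 1) (fun i _ => he0 i)
        (Finset.mem_univ i) (Finset.mem_univ j) hij hei hej
      rw [hesum, hFm, ← hDF, hDeq] at this
      exact lt_irrefl _ this
    -- some index with d ≥ 2
    have hex : ∃ i0 : Fin n, 2 ≤ d i0 := by
      by_contra h
      push_neg at h
      have hall : ∀ i, d i = 1 := fun i => by have := hd i; have := h i; omega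
      have : ∑ i, d i = n := by simp [hall]
      omega
    obtain ⟨i0, hi0⟩ := hex
    have hothers : ∀ j : Fin n, j ≠ i0 → d j = 1 := by
      intro j hj
      by_contra h
      have : 2 ≤ d j := by have := hd j; omega
      exact huniq i0 j (fun hh => hj hh.symm) hi0 this
    have hsum2 : k * m = d i0 + (n - 1) := by
      have h1 : ∑ i, d i = d i0 + ∑ j ∈ Finset.univ.erase i0, d j :=
        (Finset.add_sum_erase _ d (Finset.mem_univ i0)).symm
      have h2 : ∑ j ∈ Finset.univ.erase i0, d j = n - 1 := by
        rw [Finset.sum_congr rfl fun j hj => hothers j (Finset.mem_erase.1 hj).1]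
        simp [Finset.card_erase_of_mem]
      omega
    have hdi0 : d i0 = m := by omega
    have hnpos : 0 < n := by rw [hn]; exact Nat.succ_pos _
    refine ⟨Equiv.swap i0 ⟨0, hnpos⟩, fun i => ?_⟩
    by_cases h : i = i0
    · subst h
      rw [Equiv.swap_apply_left]
      simpa using hdi0
    · have hne' : Equiv.swap i0 ⟨0, hnpos⟩ i ≠ ⟨0, hnpos⟩ := by
        intro hh
        apply h
        have := (Equiv.swap i0 ⟨0, hnpos⟩).injective
          (hh.trans (Equiv.swap_apply_left i0 ⟨0, hnpos⟩).symm)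
        exact this
      have : ((Equiv.swap i0 ⟨0, hnpos⟩ i : Fin n) : ℕ) ≠ 0 := by
        intro hh
        exact hne' (Fin.ext hh)
      rw [if_neg this]
      exact hothers i h
  · -- permutation implies equality
    rintro ⟨σ, hσ⟩
    have hDeq : D = (m:ℝ) * Real.logb 2 (m:ℝ) := by
      have hnpos : 0 < n := by rw [hn]; exact Nat.succ_pos _
      have hterm : ∀ i : Fin n, (d i : ℝ) * Real.logb 2 (d i)
          = (fun j : Fin n => if (j : ℕ) = 0 then (m:ℝ) * Real.logb 2 (m:ℝ) else 0) (σ i) := by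
        intro i
        rw [hσ i]
        by_cases h : ((σ i : Fin n) : ℕ) = 0 <;> simp [h]
      rw [hD, Finset.sum_congr rfl fun i _ => hterm i,
        Equiv.sum_comp σ (fun j : Fin n => if (j : ℕ) = 0 then (m:ℝ) * Real.logb 2 (m:ℝ) else 0)]
      have hiff : ∀ j : Fin n, ((j : ℕ) = 0) ↔ j = ⟨0, hnpos⟩ := by
        intro j; rw [Fin.ext_iff]
      simp_rw [hiff]
      rw [Finset.sum_ite_eq' Finset.univ (⟨0, hnpos⟩ : Fin n)
        (fun _ => (m:ℝ) * Real.logb 2 (m:ℝ)), if_pos (Finset.mem_univ _)]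
    have : Iδ - B = 0 := by rw [hIB, hDeq]; ring
    linarith
end

section
/- (Theorem 3.1, upper bound.) Let k ≥ 3 and m ≥ 2 be integers and n = m(k − 1) + 1. Let (d₁, …, dₙ) be any n-tuple of positive integers with Σᵢ dᵢ = km, and set δᵢ = dᵢ(k − 1) and I_δ = log₂(k(k−1)m) − (1/(k(k−1)m))·Σᵢ δᵢ·log₂ δᵢ. Then I_δ ≤ log₂(k(k−1)m) − (1/(k(k−1)m))·[(m − 1)(2k − 2)·log₂(2k − 2) + (n − m + 1)(k − 1)·log₂(k − 1)], with equality if and only if (d₁, …, dₙ) is a permutation of the tuple consisting of m − 1 entries equal to 2 and n − m + 1 entries equal to 1. -/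
open Real Finset

/-- Pointwise strict inequality for `d ≥ 3`. -/
lemma pt_lt {a : ℕ} (ha : 3 ≤ a) : 2 * ((a:ℝ) - 1) < (a:ℝ) * Real.logb 2 a := by
  rcases eq_or_lt_of_le ha with h | h
  · rw [← h]
    have h2 : (0:ℝ) < Real.log 2 := Real.log_pos (by norm_num)
    have key : (4:ℝ) * Real.log 2 < 3 * Real.log 3 := by
      have h16 : Real.log 16 = 4 * Real.log 2 := by
        rw [show (16:ℝ) = 2^(4:ℕ) by norm_num, Real.log_pow]; push_cast; ring
      have h27 : Real.log 27 = 3 * Real.log 3 := by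
        rw [show (27:ℝ) = 3^(3:ℕ) by norm_num, Real.log_pow]; push_cast; ring
      rw [← h16, ← h27]
      exact Real.log_lt_log (by norm_num) (by norm_num)
    have : ((3:ℕ):ℝ) * Real.logb 2 ((3:ℕ):ℝ) = 3 * (Real.log 3 / Real.log 2) := by
      push_cast; rw [Real.logb]
    rw [this]
    rw [show (3:ℝ) * (Real.log 3 / Real.log 2) = 3 * Real.log 3 / Real.log 2 by ring,
      lt_div_iff₀ h2]
    push_cast
    nlinarith [key]
  · have h4 : (4:ℝ) ≤ (a:ℝ) := by exact_mod_cast h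
    have hl : (2:ℝ) ≤ Real.logb 2 a := by
      have h42 : Real.logb 2 4 = 2 := by
        rw [show (4:ℝ) = 2^(2:ℕ) by norm_num, Real.logb_pow,
          Real.logb_self_eq_one (by norm_num)]
        norm_num
      have hm := Real.logb_le_logb_of_le (b := 2) one_lt_two (show (0:ℝ) < 4 by norm_num) h4
      linarith [h42, hm]
    nlinarith [hl, h4]

lemma pt_le {a : ℕ} (ha : 1 ≤ a) : 2 * ((a:ℝ) - 1) ≤ (a:ℝ) * Real.logb 2 a := by
  by_cases h : a ≤ 2
  · interval_cases a
    · simp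
    · rw [show ((2:ℕ):ℝ) = (2:ℝ) by norm_num, Real.logb_self_eq_one (by norm_num)]
      norm_num
  · exact (pt_lt (by omega)).le

lemma pt_eq {a : ℕ} (h1 : 1 ≤ a) (h2 : a ≤ 2) :
    (a:ℝ) * Real.logb 2 a = 2 * ((a:ℝ) - 1) := by
  interval_cases a
  · simp
  · rw [show ((2:ℕ):ℝ) = (2:ℝ) by norm_num, Real.logb_self_eq_one (by norm_num)]
    norm_num

/-- Construction of the permutation when all degrees are `1` or `2`. -/
lemma perm_exists (k m n : ℕ) (hk : 3 ≤ k) (hm : 2 ≤ m) (hn : n = m * (k - 1) + 1)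
    (d : Fin n → ℕ) (hd : ∀ i, 1 ≤ d i) (hsum : ∑ i, d i = k * m)
    (hle : ∀ i, d i ≤ 2) :
    ∃ σ : Equiv.Perm (Fin n), ∀ i, d i = if ((σ i : Fin n) : ℕ) < m - 1 then 2 else 1 := by
  obtain ⟨p, rfl⟩ : ∃ p, k = p + 3 := ⟨k - 3, by omega⟩
  have hn' : n = m * p + 2 * m + 1 := by
    rw [hn, show p + 3 - 1 = p + 2 from rfl]; ring
  have hkm : (p + 3) * m = m * p + 3 * m := by ring
  -- count of 2's
  have hcount : (univ.filter (fun i : Fin n => d i = 2)).card = m - 1 := by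
    have h1 : ∑ i, d i = ∑ i : Fin n, (1 + if d i = 2 then 1 else 0) := by
      refine Finset.sum_congr rfl fun i _ => ?_
      have := hd i; have := hle i
      by_cases h : d i = 2 <;> simp [h] <;> omega
    rw [Finset.sum_add_distrib, Finset.sum_const, card_univ, Fintype.card_fin,
      smul_eq_mul, mul_one, ← Finset.card_filter, hsum, hkm] at h1
    omega
  have hmn : m - 1 ≤ n := by rw [hn']; omega
  have c1 : Fintype.card {i : Fin n // d i = 2} = m - 1 := by
    rw [Fintype.card_subtype]; exact hcount
  have c2 : Fintype.card {j : Fin n // (j : ℕ) < m - 1} = m - 1 := by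
    have e : {j : Fin n // (j : ℕ) < m - 1} ≃ Fin (m - 1) :=
      ⟨fun j => ⟨j.1.1, j.2⟩, fun i => ⟨⟨i.1, lt_of_lt_of_le i.2 hmn⟩, i.2⟩,
        fun j => rfl, fun i => rfl⟩
    rw [Fintype.card_congr e, Fintype.card_fin]
  have c1' : Fintype.card {i : Fin n // ¬ d i = 2} = n - (m - 1) := by
    rw [Fintype.card_subtype_compl, c1, Fintype.card_fin]
  have c2' : Fintype.card {j : Fin n // ¬ (j : ℕ) < m - 1} = n - (m - 1) := by
    rw [Fintype.card_subtype_compl, c2, Fintype.card_fin]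
  have e := Fintype.equivOfCardEq (c1.trans c2.symm)
  have f := Fintype.equivOfCardEq (c1'.trans c2'.symm)
  refine ⟨Equiv.subtypeCongr e f, fun i => ?_⟩
  by_cases h : d i = 2
  · have happ : (Equiv.subtypeCongr e f) i = ((e ⟨i, h⟩ : {j : Fin n // (j : ℕ) < m - 1}) : Fin n) := by
      simp [Equiv.subtypeCongr, h]
    rw [happ, if_pos (e ⟨i, h⟩).2, h]
  · have happ : (Equiv.subtypeCongr e f) i = ((f ⟨i, h⟩ : {j : Fin n // ¬ (j : ℕ) < m - 1}) : Fin n) := by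
      simp [Equiv.subtypeCongr, h]
    rw [happ, if_neg (f ⟨i, h⟩).2]
    have := hd i; have := hle i; omega

/-- Theorem 3.1, upper bound: among `k`-uniform hypertree degree sequences
(`n = m(k-1)+1` positive integers `dᵢ` with `Σ dᵢ = km`, Laplacian degrees
`δᵢ = dᵢ(k-1)`), the entropy `I_δ` is at most the loose-path value, with equality
iff `(d₁, …, dₙ)` is a permutation of the tuple with `m - 1` entries `2` and
`n - m + 1` entries `1`. -/
theorem stmt_9 (k m n : ℕ) (hk : 3 ≤ k) (hm : 2 ≤ m) (hn : n = m * (k - 1) + 1)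
    (d : Fin n → ℕ) (hd : ∀ i, 1 ≤ d i) (hsum : ∑ i, d i = k * m)
    (δ : Fin n → ℝ) (hδ : ∀ i, δ i = (d i : ℝ) * ((k : ℝ) - 1))
    (Iδ : ℝ)
    (hI : Iδ = Real.logb 2 ((k : ℝ) * ((k : ℝ) - 1) * (m : ℝ)) -
      (1 / ((k : ℝ) * ((k : ℝ) - 1) * (m : ℝ))) * ∑ i, δ i * Real.logb 2 (δ i))
    (B : ℝ)
    (hB : B = Real.logb 2 ((k : ℝ) * ((k : ℝ) - 1) * (m : ℝ)) -
      (1 / ((k : ℝ) * ((k : ℝ) - 1) * (m : ℝ))) *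
        (((m : ℝ) - 1) * (2 * (k : ℝ) - 2) * Real.logb 2 (2 * (k : ℝ) - 2) +
          ((n : ℝ) - (m : ℝ) + 1) * ((k : ℝ) - 1) * Real.logb 2 ((k : ℝ) - 1))) :
    Iδ ≤ B ∧
    (Iδ = B ↔ ∃ σ : Equiv.Perm (Fin n), ∀ i, d i = if ((σ i : Fin n) : ℕ) < m - 1 then 2 else 1) := by
  have hkR : (3:ℝ) ≤ (k:ℝ) := by exact_mod_cast hk
  have hmR : (2:ℝ) ≤ (m:ℝ) := by exact_mod_cast hm
  have hk1 : (0:ℝ) < (k:ℝ) - 1 := by linarith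
  have hk1ne : (k:ℝ) - 1 ≠ 0 := ne_of_gt hk1
  have hN : (n:ℝ) = (m:ℝ) * ((k:ℝ) - 1) + 1 := by
    rw [hn]
    push_cast [Nat.cast_sub (by omega : 1 ≤ k)]
    ring
  have hsumR : ∑ i, ((d i : ℝ)) = (k:ℝ) * (m:ℝ) := by
    exact_mod_cast congrArg (Nat.cast : ℕ → ℝ) hsum
  set S : ℝ := ∑ i, (d i : ℝ) * Real.logb 2 (d i) with hS
  -- sum of δᵢ logb δᵢ
  have hA : ∑ i, δ i * Real.logb 2 (δ i) =
      ((k:ℝ) - 1) * S + ((k:ℝ) - 1) * Real.logb 2 ((k:ℝ) - 1) * ((k:ℝ) * (m:ℝ)) := by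
    have : ∑ i, δ i * Real.logb 2 (δ i) =
        ∑ i, (((k:ℝ) - 1) * ((d i : ℝ) * Real.logb 2 (d i)) +
          ((k:ℝ) - 1) * Real.logb 2 ((k:ℝ) - 1) * (d i : ℝ)) := by
      refine Finset.sum_congr rfl fun i _ => ?_
      have hdi : ((d i : ℝ)) ≠ 0 := by
        have := hd i; positivity
      rw [hδ i, Real.logb_mul hdi hk1ne]
      ring
    rw [this, Finset.sum_add_distrib, ← Finset.mul_sum, ← Finset.mul_sum, hsumR, hS]
  -- the bound sum
  have hlb : Real.logb 2 (2 * (k:ℝ) - 2) = 1 + Real.logb 2 ((k:ℝ) - 1) := by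
    rw [show 2 * (k:ℝ) - 2 = 2 * ((k:ℝ) - 1) by ring,
      Real.logb_mul two_ne_zero hk1ne, Real.logb_self_eq_one (by norm_num)]
  have hBS : ((m:ℝ) - 1) * (2 * (k:ℝ) - 2) * Real.logb 2 (2 * (k:ℝ) - 2) +
      ((n:ℝ) - (m:ℝ) + 1) * ((k:ℝ) - 1) * Real.logb 2 ((k:ℝ) - 1) =
      ((k:ℝ) - 1) * (2 * ((m:ℝ) - 1)) +
        ((k:ℝ) - 1) * Real.logb 2 ((k:ℝ) - 1) * ((k:ℝ) * (m:ℝ)) := by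
    rw [hlb, hN]; ring
  set c : ℝ := ((k:ℝ) - 1) / ((k:ℝ) * ((k:ℝ) - 1) * (m:ℝ)) with hc
  have hcpos : 0 < c := by
    rw [hc]
    have : (0:ℝ) < (k:ℝ) := by linarith
    have : (0:ℝ) < (m:ℝ) := by linarith
    positivity
  have hdiff : Iδ - B = c * (2 * ((m:ℝ) - 1) - S) := by
    rw [hI, hB, hA, hBS, hc]
    have hx : ((k:ℝ) * ((k:ℝ) - 1) * (m:ℝ)) ≠ 0 := by
      have h1 : (0:ℝ) < (k:ℝ) := by linarith
      have h2 : (0:ℝ) < (m:ℝ) := by linarith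
      positivity
    field_simp
    ring
  -- lower bound on S
  have hlow : ∑ i, (2 * ((d i : ℝ) - 1)) = 2 * ((m:ℝ) - 1) := by
    have h1 : ∑ i, (2 * ((d i : ℝ) - 1)) = 2 * (∑ i, (d i : ℝ)) - (n:ℝ) * 2 := by
      rw [Finset.mul_sum]
      rw [show (fun i => 2 * ((d i : ℝ) - 1)) = fun i => 2 * (d i : ℝ) - 2 from
        funext fun i => by ring]
      rw [Finset.sum_sub_distrib, Finset.sum_const, card_univ, Fintype.card_fin,
        nsmul_eq_mul]
      try ring
    rw [h1, hsumR, hN]; ring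
  have hge : 2 * ((m:ℝ) - 1) ≤ S := by
    rw [← hlow, hS]
    exact Finset.sum_le_sum fun i _ => pt_le (hd i)
  constructor
  · nlinarith [hdiff, hcpos, hge]
  · have hSeq : Iδ = B ↔ S = 2 * ((m:ℝ) - 1) := by
      constructor
      · intro h
        have h0 : c * (2 * ((m:ℝ) - 1) - S) = 0 := by rw [← hdiff, h]; ring
        rcases mul_eq_zero.mp h0 with h' | h'
        · exact absurd h' (ne_of_gt hcpos)
        · linarith
      · intro h
        have : Iδ - B = 0 := by rw [hdiff, h]; ring
        linarith
    have hall : S = 2 * ((m:ℝ) - 1) ↔ ∀ i, d i ≤ 2 := by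
      constructor
      · intro h
        by_contra hcon
        push_neg at hcon
        obtain ⟨j, hj⟩ := hcon
        have hstrict : ∑ i, (2 * ((d i : ℝ) - 1)) < S := by
          rw [hS]
          refine Finset.sum_lt_sum (fun i _ => pt_le (hd i)) ⟨j, Finset.mem_univ j, ?_⟩
          exact pt_lt (by omega)
        rw [hlow] at hstrict
        linarith
      · intro h
        rw [hS, Finset.sum_congr rfl fun i _ => pt_eq (hd i) (h i), hlow]
    rw [hSeq, hall]
    constructor
    · intro h
      exact perm_exists k m n hk hm hn d hd hsum h
    · rintro ⟨σ, hσ⟩ i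
      have := hσ i
      split at this <;> omega
end

section
/- (Theorem 3.2, upper bound.) Let k ≥ 3 and m ≥ 2 be integers and n = m(k − 1). Let (d₁, …, dₙ) be any n-tuple of positive integers with Σᵢ dᵢ = km, and set δᵢ = dᵢ(k − 1) and I_δ = log₂(k(k−1)m) − (1/(k(k−1)m))·Σᵢ δᵢ·log₂ δᵢ. Then I_δ ≤ log₂(k(k−1)m) − (1/(k(k−1)m))·[2m(k − 1)·log₂(2(k − 1)) + (n − m)(k − 1)·log₂(k − 1)], with equality if and only if (d₁, …, dₙ) is a permutation of the tuple consisting of m entries equal to 2 and n − m entries equal to 1. -/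
open Real Finset

private lemma aux_strict (a : ℕ) (ha : 3 ≤ a) :
    2 * ((a : ℝ) - 1) < (a : ℝ) * Real.logb 2 (a : ℝ) := by
  rcases eq_or_lt_of_le ha with h3 | h4
  · have ha3 : a = 3 := h3.symm
    subst ha3
    have h16 : Real.logb 2 (16 : ℝ) < Real.logb 2 (27 : ℝ) :=
      Real.logb_lt_logb (by norm_num) (by norm_num) (by norm_num)
    have e1 : Real.logb 2 (16 : ℝ) = 4 := by
      rw [show (16 : ℝ) = 2 ^ (4 : ℕ) by norm_num, Real.logb_pow,
        Real.logb_self_eq_one (by norm_num)]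
      norm_num
    have e2 : Real.logb 2 (27 : ℝ) = 3 * Real.logb 2 (3 : ℝ) := by
      rw [show (27 : ℝ) = 3 ^ (3 : ℕ) by norm_num, Real.logb_pow]
      norm_num
    push_cast
    linarith
  · have h4' : (4 : ℝ) ≤ (a : ℝ) := by exact_mod_cast h4
    have hlog : (2 : ℝ) ≤ Real.logb 2 (a : ℝ) := by
      have e1 : Real.logb 2 (4 : ℝ) = 2 := by
        rw [show (4 : ℝ) = 2 ^ (2 : ℕ) by norm_num, Real.logb_pow,
          Real.logb_self_eq_one (by norm_num)]
        norm_num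
      calc (2 : ℝ) = Real.logb 2 (4 : ℝ) := e1.symm
        _ ≤ Real.logb 2 (a : ℝ) := Real.logb_le_logb_of_le (by norm_num) (by norm_num) h4'
    nlinarith

private lemma aux_nonneg (a : ℕ) (ha : 1 ≤ a) :
    0 ≤ (a : ℝ) * Real.logb 2 (a : ℝ) - 2 * ((a : ℝ) - 1) := by
  rcases Nat.lt_or_ge a 3 with h | h
  · interval_cases a
    · norm_num [Real.logb_one]
    · rw [show ((2:ℕ):ℝ) = (2:ℝ) by norm_num, Real.logb_self_eq_one (by norm_num)]
      norm_num
  · linarith [aux_strict a h]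

private lemma aux_zero_iff (a : ℕ) (ha : 1 ≤ a) :
    (a : ℝ) * Real.logb 2 (a : ℝ) - 2 * ((a : ℝ) - 1) = 0 ↔ a = 1 ∨ a = 2 := by
  constructor
  · intro h
    by_contra hc
    push_neg at hc
    have h3 : 3 ≤ a := by omega
    linarith [aux_strict a h3]
  · rintro (h | h) <;> subst h
    · norm_num [Real.logb_one]
    · rw [show ((2:ℕ):ℝ) = (2:ℝ) by norm_num, Real.logb_self_eq_one (by norm_num)]
      norm_num

/-- Theorem 3.2, upper bound: among unicyclic `k`-uniform hypergraph degree sequences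
(`n = m(k-1)` positive integers `dᵢ` with `Σ dᵢ = km`, Laplacian degrees
`δᵢ = dᵢ(k-1)`), the entropy `I_δ` is at most the value attained by the hypergraph
with Laplacian degree sequence `[2k-2^{(m)}, k-1^{(n-m)}]`, with equality iff
`(d₁, …, dₙ)` is a permutation of the tuple with `m` entries `2` and `n - m`
entries `1`. -/
theorem stmt_10 (k m n : ℕ) (hk : 3 ≤ k) (hm : 2 ≤ m) (hn : n = m * (k - 1))
    (d : Fin n → ℕ) (hd : ∀ i, 1 ≤ d i) (hsum : ∑ i, d i = k * m)
    (δ : Fin n → ℝ) (hδ : ∀ i, δ i = (d i : ℝ) * ((k : ℝ) - 1))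
    (Iδ : ℝ)
    (hI : Iδ = Real.logb 2 ((k : ℝ) * ((k : ℝ) - 1) * (m : ℝ)) -
      (1 / ((k : ℝ) * ((k : ℝ) - 1) * (m : ℝ))) * ∑ i, δ i * Real.logb 2 (δ i))
    (B : ℝ)
    (hB : B = Real.logb 2 ((k : ℝ) * ((k : ℝ) - 1) * (m : ℝ)) -
      (1 / ((k : ℝ) * ((k : ℝ) - 1) * (m : ℝ))) *
        (2 * (m : ℝ) * ((k : ℝ) - 1) * Real.logb 2 (2 * ((k : ℝ) - 1)) +
          ((n : ℝ) - (m : ℝ)) * ((k : ℝ) - 1) * Real.logb 2 ((k : ℝ) - 1))) :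
    Iδ ≤ B ∧
    (Iδ = B ↔ ∃ σ : Equiv.Perm (Fin n), ∀ i, d i = if ((σ i : Fin n) : ℕ) < m then 2 else 1) := by
  have hk1 : (1 : ℕ) ≤ k := by omega
  have hkR : (3 : ℝ) ≤ (k : ℝ) := by exact_mod_cast hk
  have hK2 : (2 : ℝ) ≤ (k : ℝ) - 1 := by linarith
  have hKpos : (0 : ℝ) < (k : ℝ) - 1 := by linarith
  have hKne : ((k : ℝ) - 1) ≠ 0 := ne_of_gt hKpos
  have hmR : (2 : ℝ) ≤ (m : ℝ) := by exact_mod_cast hm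
  have hmpos : (0 : ℝ) < (m : ℝ) := by linarith
  have hkpos : (0 : ℝ) < (k : ℝ) := by linarith
  have hCpos : (0 : ℝ) < (k : ℝ) * ((k : ℝ) - 1) * (m : ℝ) :=
    mul_pos (mul_pos hkpos hKpos) hmpos
  have hnR : (n : ℝ) = (m : ℝ) * ((k : ℝ) - 1) := by
    rw [hn, Nat.cast_mul, Nat.cast_sub hk1, Nat.cast_one]
  have hDR : ∑ i, (d i : ℝ) = (k : ℝ) * (m : ℝ) := by exact_mod_cast hsum
  set C : ℝ := (k : ℝ) * ((k : ℝ) - 1) * (m : ℝ) with hCdef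
  set S : ℝ := ∑ i, δ i * Real.logb 2 (δ i) with hSdef
  set Sstar : ℝ := 2 * (m : ℝ) * ((k : ℝ) - 1) * Real.logb 2 (2 * ((k : ℝ) - 1)) +
      ((n : ℝ) - (m : ℝ)) * ((k : ℝ) - 1) * Real.logb 2 ((k : ℝ) - 1) with hSstardef
  set T : ℝ := ∑ i, ((d i : ℝ) * Real.logb 2 (d i : ℝ) - 2 * ((d i : ℝ) - 1)) with hTdef
  -- key identity
  have hterm : ∀ i, δ i * Real.logb 2 (δ i) =
      ((k : ℝ) - 1) * ((d i : ℝ) * Real.logb 2 (d i : ℝ)) +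
        (d i : ℝ) * (((k : ℝ) - 1) * Real.logb 2 ((k : ℝ) - 1)) := by
    intro i
    have hdi : (0 : ℝ) < (d i : ℝ) := by exact_mod_cast hd i
    rw [hδ i, Real.logb_mul (ne_of_gt hdi) hKne]
    ring
  have hlog2K : Real.logb 2 (2 * ((k : ℝ) - 1)) = 1 + Real.logb 2 ((k : ℝ) - 1) := by
    rw [Real.logb_mul two_ne_zero hKne, Real.logb_self_eq_one (by norm_num)]
  have hTsplit : T = (∑ i, (d i : ℝ) * Real.logb 2 (d i : ℝ)) -
      (2 * ((k : ℝ) * (m : ℝ)) - 2 * (n : ℝ)) := by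
    have haux : ∑ i : Fin n, ((d i : ℝ) - 1) = (k : ℝ) * (m : ℝ) - (n : ℝ) := by
      rw [Finset.sum_sub_distrib, hDR]
      simp [Finset.card_univ]
    rw [hTdef, Finset.sum_sub_distrib, ← Finset.mul_sum, haux]
    ring
  have hS : S = ((k : ℝ) - 1) * T + Sstar := by
    rw [hSdef]
    calc ∑ i, δ i * Real.logb 2 (δ i)
        = ∑ i, (((k : ℝ) - 1) * ((d i : ℝ) * Real.logb 2 (d i : ℝ)) +
            (d i : ℝ) * (((k : ℝ) - 1) * Real.logb 2 ((k : ℝ) - 1))) :=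
          Finset.sum_congr rfl fun i _ => hterm i
      _ = ((k : ℝ) - 1) * (∑ i, (d i : ℝ) * Real.logb 2 (d i : ℝ)) +
            (((k : ℝ) - 1) * Real.logb 2 ((k : ℝ) - 1)) * ∑ i, (d i : ℝ) := by
          rw [Finset.sum_add_distrib, ← Finset.mul_sum, ← Finset.sum_mul]
          ring
      _ = ((k : ℝ) - 1) * T + Sstar := by
          rw [hDR, hTsplit, hSstardef, hlog2K, hnR]
          ring
  have hT_nonneg : (0 : ℝ) ≤ T :=
    Finset.sum_nonneg fun i _ => aux_nonneg (d i) (hd i)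
  have hle : Sstar ≤ S := by
    have : 0 ≤ ((k : ℝ) - 1) * T := mul_nonneg hKpos.le hT_nonneg
    linarith [hS]
  constructor
  · rw [hI, hB]
    have h2 : (1 / C) * Sstar ≤ (1 / C) * S :=
      mul_le_mul_of_nonneg_left hle (by positivity)
    linarith
  · have hiffT : Iδ = B ↔ T = 0 := by
      rw [hI, hB]
      constructor
      · intro h
        have h2 : (1 / C) * S = (1 / C) * Sstar := by linarith
        have h3 : S = Sstar := mul_left_cancel₀ (one_div_ne_zero (ne_of_gt hCpos)) h2
        have h4 : ((k : ℝ) - 1) * T = 0 := by linarith [hS]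
        rcases mul_eq_zero.mp h4 with h5 | h5
        · exact absurd h5 hKne
        · exact h5
      · intro h
        have : S = Sstar := by rw [hS, h]; ring
        rw [this]
    rw [hiffT]
    have hT0 : T = 0 ↔ ∀ i, d i = 1 ∨ d i = 2 := by
      rw [hTdef, Finset.sum_eq_zero_iff_of_nonneg fun i _ => aux_nonneg (d i) (hd i)]
      constructor
      · intro h i
        exact (aux_zero_iff (d i) (hd i)).mp (h i (Finset.mem_univ i))
      · intro h i _
        exact (aux_zero_iff (d i) (hd i)).mpr (h i)
    rw [hT0]
    have hmn : m ≤ n := by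
      rw [hn]
      calc m = m * 1 := (mul_one m).symm
        _ ≤ m * (k - 1) := Nat.mul_le_mul_left m (by omega)
    have hkm : k * m = n + m := by
      rw [hn]
      have : m * (k - 1) + m = m * (k - 1 + 1) := by ring
      rw [this, show k - 1 + 1 = k from by omega, Nat.mul_comm]
    constructor
    · intro h
      -- count the 2's
      have hcardfilter : (Finset.univ.filter (fun i : Fin n => d i = 2)).card = m := by
        have hrepr : ∀ i, d i = 1 + (if d i = 2 then 1 else 0) := by
          intro i
          rcases h i with h1 | h1 <;> simp [h1]
        have hsum' : k * m = n + (Finset.univ.filter (fun i : Fin n => d i = 2)).card := by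
          rw [← hsum, Finset.sum_congr rfl fun i _ => hrepr i, Finset.sum_add_distrib]
          rw [Finset.card_filter]
          simp [Finset.card_univ]
        omega
      have hcard2 : Fintype.card {i : Fin n // d i = 2} = m := by
        rw [Fintype.card_subtype]
        exact hcardfilter
      have hcardlt : Fintype.card {i : Fin n // (i : ℕ) < m} = m := by
        have e : {i : Fin n // (i : ℕ) < m} ≃ Fin m :=
          { toFun := fun x => ⟨x.1, x.2⟩
            invFun := fun j => ⟨⟨j.1, lt_of_lt_of_le j.2 hmn⟩, j.2⟩
            left_inv := fun x => rfl
            right_inv := fun j => rfl }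
        rw [Fintype.card_congr e, Fintype.card_fin]
      obtain e := Fintype.equivOfCardEq (hcard2.trans hcardlt.symm)
      refine ⟨e.extendSubtype, fun i => ?_⟩
      rcases h i with h1 | h2
      · rw [h1, if_neg]
        have hne : ¬ d i = 2 := by omega
        exact e.extendSubtype_not_mem i hne
      · rw [h2, if_pos (e.extendSubtype_mem i h2)]
    · rintro ⟨σ, hσ⟩ i
      rw [hσ i]
      split <;> simp
end

section
/- (Lemma 3.3 / Theorem 3.4, H* side.) Let k ≥ 3 and m ≥ 3 be integers and n = m(k − 1) − 1. Let (d₁, …, dₙ) be any n-tuple of positive integers with Σᵢ dᵢ = km, and set δᵢ = dᵢ(k − 1). Then Σᵢ δᵢ·log₂ δᵢ ≥ (m + 1)(2k − 2)·log₂(2k − 2) + (n − m − 1)(k − 1)·log₂(k − 1), equivalently the entropy I_δ = log₂(k(k−1)m) − (1/(k(k−1)m))·Σᵢ δᵢ·log₂ δᵢ satisfies I_δ ≤ log₂(k(k−1)m) − (1/(k(k−1)m))·[(m + 1)(2k − 2)·log₂(2k − 2) + (n − m − 1)(k − 1)·log₂(k − 1)], with equality if and only if (d₁, …, dₙ) is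 a permutation of the tuple consisting of m + 1 entries equal to 2 and n − m − 1 entries equal to 1. -/
lemma term_lt_aux (d : ℕ) (hd : 3 ≤ d) :
    2 * ((d:ℝ) - 1) < (d:ℝ) * Real.logb 2 (d:ℝ) := by
  rcases eq_or_lt_of_le hd with h | h
  · subst_vars
    have h16 : Real.logb 2 (16:ℝ) = 4 := by
      rw [show (16:ℝ) = 2 ^ (4:ℕ) by norm_num, Real.logb_pow,
        Real.logb_self_eq_one (by norm_num)]
      norm_num
    have h27 : Real.logb 2 (27:ℝ) = 3 * Real.logb 2 3 := by
      rw [show (27:ℝ) = 3 ^ (3:ℕ) by norm_num, Real.logb_pow]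
      norm_num
    have hlt : Real.logb 2 (16:ℝ) < Real.logb 2 (27:ℝ) :=
      Real.logb_lt_logb (by norm_num) (by norm_num) (by norm_num)
    rw [h16, h27] at hlt
    push_cast
    linarith
  · have h4 : (4:ℝ) ≤ (d:ℝ) := by exact_mod_cast h
    have h2 : (2:ℝ) ≤ Real.logb 2 (d:ℝ) := by
      have : Real.logb 2 (4:ℝ) ≤ Real.logb 2 (d:ℝ) :=
        Real.logb_le_logb_of_le (by norm_num) (by norm_num) h4
      rwa [show (4:ℝ) = 2 ^ (2:ℕ) by norm_num, Real.logb_pow,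
        Real.logb_self_eq_one (by norm_num), mul_one] at this
    nlinarith

lemma term_le_aux (d : ℕ) (hd : 1 ≤ d) :
    2 * ((d:ℝ) - 1) ≤ (d:ℝ) * Real.logb 2 (d:ℝ) := by
  rcases Nat.lt_or_ge d 3 with h | h
  · interval_cases d
    · simp
    · rw [show ((2:ℕ):ℝ) = (2:ℝ) by norm_num, Real.logb_self_eq_one (by norm_num)]
      norm_num
  · exact (term_lt_aux d h).le

lemma term_eq_aux (d : ℕ) (hd1 : 1 ≤ d) (hd : d ≤ 2) :
    (d:ℝ) * Real.logb 2 (d:ℝ) = 2 * ((d:ℝ) - 1) := by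
  interval_cases d
  · simp
  · rw [show ((2:ℕ):ℝ) = (2:ℝ) by norm_num, Real.logb_self_eq_one (by norm_num)]
    norm_num

/-- Lemma 3.3 / Theorem 3.4, `H*` side: among bicyclic `k`-uniform hypergraph degree
sequences (`n = m(k-1) - 1` positive integers `dᵢ` with `Σ dᵢ = km`, Laplacian degrees
`δᵢ = dᵢ(k-1)`), `Σ δᵢ log₂ δᵢ` is at least `(m+1)(2k-2)log₂(2k-2) +
(n-m-1)(k-1)log₂(k-1)`; equivalently the entropy `I_δ` is at most the corresponding
bound, with equality iff `(d₁, …, dₙ)` is a permutation of the tuple with `m + 1`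
entries `2` and `n - m - 1` entries `1`. -/
theorem stmt_11 (k m n : ℕ) (hk : 3 ≤ k) (hm : 3 ≤ m) (hn : n = m * (k - 1) - 1)
    (d : Fin n → ℕ) (hd : ∀ i, 1 ≤ d i) (hsum : ∑ i, d i = k * m)
    (δ : Fin n → ℝ) (hδ : ∀ i, δ i = (d i : ℝ) * ((k : ℝ) - 1))
    (Iδ : ℝ)
    (hI : Iδ = Real.logb 2 ((k : ℝ) * ((k : ℝ) - 1) * (m : ℝ)) -
      (1 / ((k : ℝ) * ((k : ℝ) - 1) * (m : ℝ))) * ∑ i, δ i * Real.logb 2 (δ i))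
    (B : ℝ)
    (hB : B = Real.logb 2 ((k : ℝ) * ((k : ℝ) - 1) * (m : ℝ)) -
      (1 / ((k : ℝ) * ((k : ℝ) - 1) * (m : ℝ))) *
        (((m : ℝ) + 1) * (2 * (k : ℝ) - 2) * Real.logb 2 (2 * (k : ℝ) - 2) +
          ((n : ℝ) - (m : ℝ) - 1) * ((k : ℝ) - 1) * Real.logb 2 ((k : ℝ) - 1))) :
    (((m : ℝ) + 1) * (2 * (k : ℝ) - 2) * Real.logb 2 (2 * (k : ℝ) - 2) +
        ((n : ℝ) - (m : ℝ) - 1) * ((k : ℝ) - 1) * Real.logb 2 ((k : ℝ) - 1) ≤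
      ∑ i, δ i * Real.logb 2 (δ i)) ∧
    Iδ ≤ B ∧
    (Iδ = B ↔ ∃ σ : Equiv.Perm (Fin n), ∀ i, d i = if ((σ i : Fin n) : ℕ) < m + 1 then 2 else 1) := by
  classical
  have hkR : (3:ℝ) ≤ (k:ℝ) := by exact_mod_cast hk
  have hmR : (3:ℝ) ≤ (m:ℝ) := by exact_mod_cast hm
  have hKpos : (0:ℝ) < (k:ℝ) - 1 := by linarith
  have hnR : (n:ℝ) = (m:ℝ) * ((k:ℝ) - 1) - 1 := by
    have h1 : 1 ≤ m * (k - 1) := Nat.one_le_iff_ne_zero.mpr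
      (Nat.mul_ne_zero (by omega) (by omega))
    rw [hn, Nat.cast_sub h1, Nat.cast_mul, Nat.cast_sub (by omega : 1 ≤ k)]
    push_cast
    ring
  -- S := ∑ d log d
  set S : ℝ := ∑ i, (d i : ℝ) * Real.logb 2 (d i) with hS
  have hsR : ∑ i, (d i : ℝ) = (k:ℝ) * (m:ℝ) := by
    rw [← Nat.cast_sum]
    exact_mod_cast congrArg (Nat.cast : ℕ → ℝ) hsum
  have hsub : ∑ i, δ i * Real.logb 2 (δ i)
      = ((k:ℝ) - 1) * S + ((k:ℝ) - 1) * Real.logb 2 ((k:ℝ) - 1) * ((k:ℝ) * (m:ℝ)) := by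
    have hterm : ∀ i ∈ Finset.univ, δ i * Real.logb 2 (δ i)
        = ((k:ℝ) - 1) * ((d i : ℝ) * Real.logb 2 (d i))
          + (((k:ℝ) - 1) * Real.logb 2 ((k:ℝ) - 1)) * (d i : ℝ) := by
      intro i _
      have hdne : ((d i : ℝ)) ≠ 0 := by
        have := hd i
        positivity
      rw [hδ i, Real.logb_mul hdne (ne_of_gt hKpos)]
      ring
    rw [Finset.sum_congr rfl hterm, Finset.sum_add_distrib, ← Finset.mul_sum,
      ← Finset.mul_sum, hsR, hS]
  have h2K : Real.logb 2 (2 * (k:ℝ) - 2) = 1 + Real.logb 2 ((k:ℝ) - 1) := by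
    rw [show 2 * (k:ℝ) - 2 = 2 * ((k:ℝ) - 1) by ring,
      Real.logb_mul two_ne_zero (ne_of_gt hKpos), Real.logb_self_eq_one (by norm_num)]
  have hS0 : ((m : ℝ) + 1) * (2 * (k : ℝ) - 2) * Real.logb 2 (2 * (k : ℝ) - 2) +
        ((n : ℝ) - (m : ℝ) - 1) * ((k : ℝ) - 1) * Real.logb 2 ((k : ℝ) - 1)
      = 2 * ((m:ℝ) + 1) * ((k:ℝ) - 1)
        + ((k:ℝ) - 1) * Real.logb 2 ((k:ℝ) - 1) * ((k:ℝ) * (m:ℝ)) := by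
    rw [h2K, hnR]
    ring
  have hkey : (∑ i, δ i * Real.logb 2 (δ i)) -
      (((m : ℝ) + 1) * (2 * (k : ℝ) - 2) * Real.logb 2 (2 * (k : ℝ) - 2) +
        ((n : ℝ) - (m : ℝ) - 1) * ((k : ℝ) - 1) * Real.logb 2 ((k : ℝ) - 1))
      = ((k:ℝ) - 1) * (S - 2 * ((m:ℝ) + 1)) := by
    rw [hsub, hS0]
    ring
  have hsum1 : ∑ i, ((d i : ℝ) - 1) = (m:ℝ) + 1 := by
    rw [Finset.sum_sub_distrib, hsR, Finset.sum_const, Finset.card_univ, Fintype.card_fin,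
      nsmul_eq_mul, mul_one, hnR]
    ring
  have hS_ge : 2 * ((m:ℝ) + 1) ≤ S := by
    calc 2 * ((m:ℝ) + 1) = ∑ i, 2 * ((d i : ℝ) - 1) := by
          rw [← Finset.mul_sum, hsum1]
      _ ≤ S := Finset.sum_le_sum fun i _ => term_le_aux (d i) (hd i)
  have part1 : ((m : ℝ) + 1) * (2 * (k : ℝ) - 2) * Real.logb 2 (2 * (k : ℝ) - 2) +
        ((n : ℝ) - (m : ℝ) - 1) * ((k : ℝ) - 1) * Real.logb 2 ((k : ℝ) - 1) ≤
      ∑ i, δ i * Real.logb 2 (δ i) := by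
    have h0 : (0:ℝ) ≤ ((k:ℝ) - 1) * (S - 2 * ((m:ℝ) + 1)) :=
      mul_nonneg hKpos.le (by linarith)
    linarith [hkey]
  have hPpos : (0:ℝ) < (k:ℝ) * ((k:ℝ) - 1) * (m:ℝ) := by positivity
  have part2 : Iδ ≤ B := by
    rw [hI, hB]
    have := mul_le_mul_of_nonneg_left part1 (le_of_lt (one_div_pos.mpr hPpos))
    linarith
  refine ⟨part1, part2, ?_⟩
  -- equality chain
  have step1 : Iδ = B ↔ S = 2 * ((m:ℝ) + 1) := by
    rw [hI, hB]
    constructor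
    · intro h
      have h2 : (1 / ((k:ℝ) * ((k:ℝ) - 1) * (m:ℝ))) *
          (∑ i, δ i * Real.logb 2 (δ i)) =
          (1 / ((k:ℝ) * ((k:ℝ) - 1) * (m:ℝ))) *
          (((m : ℝ) + 1) * (2 * (k : ℝ) - 2) * Real.logb 2 (2 * (k : ℝ) - 2) +
            ((n : ℝ) - (m : ℝ) - 1) * ((k : ℝ) - 1) * Real.logb 2 ((k : ℝ) - 1)) := by
        linarith
      have h3 := mul_left_cancel₀ (by positivity : (1 / ((k:ℝ) * ((k:ℝ) - 1) * (m:ℝ))) ≠ 0) h2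
      have h4 : ((k:ℝ) - 1) * (S - 2 * ((m:ℝ) + 1)) = 0 := by
        rw [← hkey, h3]
        ring
      rcases mul_eq_zero.mp h4 with h5 | h5
      · linarith
      · linarith
    · intro h
      have h4 : ((k:ℝ) - 1) * (S - 2 * ((m:ℝ) + 1)) = 0 := by rw [h]; ring
      rw [← hkey] at h4
      have h5 : ∑ i, δ i * Real.logb 2 (δ i)
          = ((m : ℝ) + 1) * (2 * (k : ℝ) - 2) * Real.logb 2 (2 * (k : ℝ) - 2) +
            ((n : ℝ) - (m : ℝ) - 1) * ((k : ℝ) - 1) * Real.logb 2 ((k : ℝ) - 1) := by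
        linarith
      rw [h5]
  have step2 : S = 2 * ((m:ℝ) + 1) ↔ ∀ i, d i ≤ 2 := by
    constructor
    · intro h
      have hzero : ∑ i, ((d i : ℝ) * Real.logb 2 (d i) - 2 * ((d i : ℝ) - 1)) = 0 := by
        rw [Finset.sum_sub_distrib, ← hS, ← Finset.mul_sum, hsum1, h]
        ring
      have hnn : ∀ i ∈ Finset.univ,
          (0:ℝ) ≤ (d i : ℝ) * Real.logb 2 (d i) - 2 * ((d i : ℝ) - 1) :=
        fun i _ => by linarith [term_le_aux (d i) (hd i)]
      have heach := (Finset.sum_eq_zero_iff_of_nonneg hnn).mp hzero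
      intro i
      by_contra hcon
      have h3 : 3 ≤ d i := by omega
      have := term_lt_aux (d i) h3
      have := heach i (Finset.mem_univ i)
      linarith
    · intro h
      have : ∀ i ∈ Finset.univ, (d i : ℝ) * Real.logb 2 (d i) = 2 * ((d i : ℝ) - 1) :=
        fun i _ => term_eq_aux (d i) (hd i) (h i)
      rw [hS, Finset.sum_congr rfl this, ← Finset.mul_sum, hsum1]
  rw [step1, step2]
  -- combinatorial part
  have hmn : m + 1 < n := by
    have h2 : m * 2 ≤ m * (k - 1) := Nat.mul_le_mul_left m (by omega)
    omega
  constructor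
  · intro hle
    set p : Fin n → Prop := fun i => d i = 2 with hp
    set q : Fin n → Prop := fun i => (i : ℕ) < m + 1 with hq
    have cardq : Fintype.card {i : Fin n // q i} = m + 1 := by
      rw [Fintype.card_subtype]
      have hfe : (Finset.univ.filter q) = Finset.Iio (⟨m + 1, hmn⟩ : Fin n) := by
        ext i
        simp only [Finset.mem_filter, Finset.mem_univ, true_and, Finset.mem_Iio,
          Fin.lt_def, hq]
      rw [hfe, Fin.card_Iio]
    have cardp : Fintype.card {i : Fin n // p i} = m + 1 := by
      rw [Fintype.card_subtype]
      have hrep : ∀ i, d i = 1 + (if p i then 1 else 0) := by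
        intro i
        have := hd i
        have := hle i
        by_cases h : d i = 2 <;> simp [hp, h] <;> omega
      have hcount : k * m = n + (Finset.univ.filter p).card := by
        rw [← hsum, Finset.sum_congr rfl (fun i _ => hrep i), Finset.sum_add_distrib,
          Finset.sum_const, Finset.card_univ, Fintype.card_fin, Finset.sum_boole,
          Nat.cast_id, smul_eq_mul, mul_one]
      have hkm : k * m = n + (m + 1) := by
        have h1 : m * (k - 1) + m = m * k := by
          have hkk : k - 1 + 1 = k := by omega
          calc m * (k - 1) + m = m * ((k - 1) + 1) := by ring
            _ = m * k := by rw [hkk]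
        have h6 : 3 * 2 ≤ m * (k - 1) := Nat.mul_le_mul hm (by omega : 2 ≤ k - 1)
        have h0 : k * m = m * k := Nat.mul_comm k m
        omega
      have heq : (Finset.univ.filter fun x => p x) = Finset.univ.filter p := rfl
      rw [heq]
      omega
    have cardp' : Fintype.card {i : Fin n // ¬ p i} = Fintype.card {i : Fin n // ¬ q i} := by
      rw [Fintype.card_subtype_compl, Fintype.card_subtype_compl, cardp, cardq]
    have e : {i : Fin n // p i} ≃ {i : Fin n // q i} :=
      Fintype.equivOfCardEq (by rw [cardp, cardq])
    have f : {i : Fin n // ¬ p i} ≃ {i : Fin n // ¬ q i} :=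
      Fintype.equivOfCardEq cardp'
    refine ⟨Equiv.subtypeCongr e f, fun i => ?_⟩
    by_cases h : p i
    · have h1 : Equiv.subtypeCongr e f i = (e ⟨i, h⟩ : Fin n) := by
        simp only [Equiv.subtypeCongr, Equiv.trans_apply, Equiv.sumCongr_apply]
        rw [Equiv.sumCompl_symm_apply_of_pos h]
        simp
      have h2 : q ((Equiv.subtypeCongr e f) i) := by rw [h1]; exact (e ⟨i, h⟩).2
      rw [if_pos h2]
      exact h
    · have h1 : Equiv.subtypeCongr e f i = (f ⟨i, h⟩ : Fin n) := by
        simp only [Equiv.subtypeCongr, Equiv.trans_apply, Equiv.sumCongr_apply]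
        rw [Equiv.sumCompl_symm_apply_of_neg h]
        simp
      have h2 : ¬ q ((Equiv.subtypeCongr e f) i) := by rw [h1]; exact (f ⟨i, h⟩).2
      rw [if_neg h2]
      have := hd i
      have := hle i
      simp only [hp] at h
      omega
  · rintro ⟨σ, hσ⟩ i
    rw [hσ i]
    split <;> omega
end

section
/- Let n, a, r be nonnegative integers with r ∈ {0, 1, 2} and a + 1 ≤ n, and set t = 3a + r. Then the n-tuple consisting of a entries equal to 4, one entry equal to r + 1, and n − a − 1 entries equal to 1 majorizes every n-tuple of integers, each lying between 1 and 4, with sum n + t. (This majorization underlies the extremality of the chemical hypertree family T* in Lemma 3.5, with t = m − 1.) -/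
/-- The non-increasing rearrangement of an `n`-tuple of reals. -/
noncomputable def sortDesc {n : ℕ} (x : Fin n → ℝ) : Fin n → ℝ :=
  fun i => x (Tuple.sort x i.rev)

/-- `y` majorizes `x`: the tuples have equal sums and, after sorting both in
non-increasing order, every initial partial sum of `y` is at least the corresponding
initial partial sum of `x`. -/
def Majorizes {n : ℕ} (y x : Fin n → ℝ) : Prop :=
  (∑ i, x i = ∑ i, y i) ∧
  ∀ k : ℕ,
    ∑ i ∈ Finset.univ.filter (fun i : Fin n => (i : ℕ) < k), sortDesc x i ≤
      ∑ i ∈ Finset.univ.filter (fun i : Fin n => (i : ℕ) < k), sortDesc y i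

open Finset

lemma sortDesc_eq_of_antitone {n : ℕ} {y : Fin n → ℝ} (hy : Antitone y) :
    sortDesc y = y := by
  have h1 : Monotone (y ∘ (Tuple.sort y)) := Tuple.monotone_sort y
  have h2 : Monotone (y ∘ (Fin.revPerm : Equiv.Perm (Fin n))) := by
    intro i j hij
    exact hy (by simpa using Fin.rev_le_rev.mpr hij)
  have h := Tuple.unique_monotone h1 h2
  funext i
  have := congrFun h i.rev
  simpa [sortDesc, Fin.rev_rev] using this

lemma sum_sortDesc {n : ℕ} (x : Fin n → ℝ) : ∑ i, sortDesc x i = ∑ i, x i :=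
  Fintype.sum_equiv ((Fin.revPerm : Equiv.Perm (Fin n)).trans (Tuple.sort x)) _ _
    (fun _ => rfl)

lemma card_filter_lt {n k : ℕ} :
    (Finset.univ.filter (fun i : Fin n => (i : ℕ) < k)).card = min k n := by
  rcases le_or_gt n k with h | h
  · have : Finset.univ.filter (fun i : Fin n => (i : ℕ) < k) = univ := by
      apply filter_true_of_mem
      intro i _
      exact lt_of_lt_of_le i.isLt h
    rw [this, card_univ, Fintype.card_fin, min_eq_right h]
  · have : Finset.univ.filter (fun i : Fin n => (i : ℕ) < k) = Iio ⟨k, h⟩ := by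
      ext i
      simp [Fin.lt_def]
    rw [this, Fin.card_Iio, min_eq_left h.le]

/-- For `r ∈ {0, 1, 2}`, `a + 1 ≤ n` and `t = 3a + r`, the `n`-tuple with `a` entries
equal to `4`, one entry equal to `r + 1`, and `n - a - 1` entries equal to `1`
majorizes every `n`-tuple of integers between `1` and `4` with sum `n + t`. -/
theorem stmt_12 (n a r : ℕ) (hr : r ≤ 2) (ha : a + 1 ≤ n) (t : ℕ) (ht : t = 3 * a + r)
    (d : Fin n → ℕ) (hd : ∀ i, 1 ≤ d i ∧ d i ≤ 4) (hsum : ∑ i, d i = n + t) :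
    Majorizes
      (fun i : Fin n => if (i : ℕ) < a then (4 : ℝ) else if (i : ℕ) = a then (r : ℝ) + 1 else 1)
      (fun i => (d i : ℝ)) := by
  have han : a < n := ha
  set y : Fin n → ℝ :=
    fun i => if (i : ℕ) < a then (4 : ℝ) else if (i : ℕ) = a then (r : ℝ) + 1 else 1 with hy
  set x : Fin n → ℝ := fun i => (d i : ℝ) with hx
  -- rewrite y as a sum of indicators
  have hy' : ∀ i : Fin n, y i =
      1 + (if (i : ℕ) < a then (3 : ℝ) else 0) + (if i = (⟨a, han⟩ : Fin n) then (r : ℝ) else 0) := by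
    intro i
    rcases lt_trichotomy (i : ℕ) a with h | h | h
    · have : i ≠ (⟨a, han⟩ : Fin n) := by
        intro he; rw [he] at h; simp at h
      simp [hy, h, this]
      norm_num
    · have hne : ¬ ((i : ℕ) < a) := by omega
      have : i = (⟨a, han⟩ : Fin n) := Fin.ext h
      simp [hy, hne, h, this]
      ring
    · have hne : ¬ ((i : ℕ) < a) := by omega
      have h2 : (i : ℕ) ≠ a := by omega
      have : i ≠ (⟨a, han⟩ : Fin n) := by
        intro he; rw [he] at h2; simp at h2
      simp [hy, hne, h2, this]
  -- partial sums of y over initial segments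
  have hsy : ∀ k : ℕ, ∑ i ∈ Finset.univ.filter (fun i : Fin n => (i : ℕ) < k), y i
      = ((min k n : ℕ) : ℝ) + 3 * ((min (min k a) n : ℕ) : ℝ) + (if a < k then (r : ℝ) else 0) := by
    intro k
    rw [Finset.sum_congr rfl (fun i _ => hy' i)]
    rw [Finset.sum_add_distrib, Finset.sum_add_distrib]
    congr 1
    · congr 1
      · rw [Finset.sum_const, card_filter_lt, nsmul_eq_mul, mul_one]
      · rw [Finset.sum_ite, Finset.sum_const, Finset.sum_const, smul_zero, add_zero,
          Finset.filter_filter]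
        have : (Finset.univ.filter fun i : Fin n => (i : ℕ) < k ∧ (i : ℕ) < a)
            = Finset.univ.filter fun i : Fin n => (i : ℕ) < min k a := by
          apply Finset.filter_congr
          intro i _
          simp [lt_min_iff]
        rw [this, card_filter_lt, nsmul_eq_mul, mul_comm]
    · rw [Finset.sum_ite_eq' (Finset.univ.filter fun i : Fin n => (i : ℕ) < k) (⟨a, han⟩ : Fin n)
        (fun _ => (r : ℝ))]
      simp
  have hsumy : ∑ i, y i = (n : ℝ) + t := by
    have h := hsy (n + t + a + 1)
    have hfilt : (Finset.univ.filter fun i : Fin n => (i : ℕ) < n + t + a + 1) = univ := by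
      apply filter_true_of_mem
      intro i _
      omega
    rw [hfilt] at h
    rw [h]
    have h1 : min (n + t + a + 1) n = n := by omega
    have h2 : min (min (n + t + a + 1) a) n = a := by omega
    have h3 : a < n + t + a + 1 := by omega
    rw [h1, h2, if_pos h3]
    push_cast [ht]
    ring
  have hsumx : ∑ i, x i = (n : ℝ) + t := by
    rw [hx, ← Nat.cast_sum, hsum]
    push_cast
    ring
  constructor
  · rw [hsumx, hsumy]
  · intro k
    -- y is antitone, so sortDesc y = y
    have hyanti : Antitone y := by
      intro i j hij
      have hij' : (i : ℕ) ≤ (j : ℕ) := hij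
      rcases lt_trichotomy (j : ℕ) a with h | h | h
      · have : (i : ℕ) < a := by omega
        simp [hy, h, this]
      · have h2 : ¬ ((j : ℕ) < a) := by omega
        rcases lt_or_ge (i : ℕ) a with h3 | h3
        · have : (r : ℝ) + 1 ≤ 4 := by
            have : (r : ℝ) ≤ 2 := by exact_mod_cast hr
            linarith
          simp only [hy, h2, h, h3, if_true, if_false, ite_true, ite_false]
          simpa [h3, h2, h] using this
        · have h4 : (i : ℕ) = a := by omega
          simp [hy, h2, h, h4, h3.not_gt]
      · have h2 : ¬ ((j : ℕ) < a) := by omega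
        have h3 : (j : ℕ) ≠ a := by omega
        have h4 : (1 : ℝ) ≤ y i := by
          rcases lt_or_ge (i : ℕ) a with h5 | h5
          · simp only [hy]
            rw [if_pos h5]
            norm_num
          · rcases eq_or_ne (i : ℕ) a with h6 | h6
            · simp only [hy]
              rw [if_neg h5.not_gt, if_pos h6]
              have : (0:ℝ) ≤ r := Nat.cast_nonneg r
              linarith
            · simp [hy, h5.not_gt, h6]
        simpa [hy, h2, h3] using h4
    have hsdy : sortDesc y = y := sortDesc_eq_of_antitone hyanti
    rw [hsdy]
    set S := Finset.univ.filter (fun i : Fin n => (i : ℕ) < k) with hS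
    have hcard : S.card = min k n := card_filter_lt
    -- bounds on entries of sortDesc x
    have hxb : ∀ i, 1 ≤ sortDesc x i ∧ sortDesc x i ≤ 4 := by
      intro i
      unfold sortDesc
      constructor
      · simp only [hx]
        exact_mod_cast (hd _).1
      · simp only [hx]
        exact_mod_cast (hd _).2
    rcases le_or_gt k a with hka | hka
    -- case k ≤ a : bound by 4 * k
    · have hkn : k < n := by omega
      have h1 : ∑ i ∈ S, sortDesc x i ≤ 4 * (S.card : ℝ) := by
        calc ∑ i ∈ S, sortDesc x i ≤ ∑ i ∈ S, (4 : ℝ) :=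
              Finset.sum_le_sum (fun i _ => (hxb i).2)
          _ = 4 * (S.card : ℝ) := by rw [Finset.sum_const]; ring
      have h2 : ∑ i ∈ S, y i = 4 * (S.card : ℝ) := by
        rw [hS, hsy k, hcard]
        have e1 : min k n = k := by omega
        have e2 : min (min k a) n = k := by omega
        rw [e1, e2, if_neg (by omega)]
        ring
      rw [h2]
      exact h1
    -- case k > a : bound by t + min k n
    · have h1 : ∑ i ∈ S, sortDesc x i ≤ (t : ℝ) + (min k n : ℝ) := by
        have hcompl : ((n : ℝ) - (min k n : ℝ)) ≤ ∑ i ∈ Sᶜ, sortDesc x i := by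
          calc ((n : ℝ) - (min k n : ℝ)) = (Sᶜ.card : ℝ) := by
                rw [Finset.card_compl, hcard, Fintype.card_fin]
                have : min k n ≤ n := min_le_right _ _
                push_cast [Nat.cast_sub this]
                ring
            _ = ∑ i ∈ Sᶜ, (1 : ℝ) := by rw [Finset.sum_const]; simp
            _ ≤ ∑ i ∈ Sᶜ, sortDesc x i := Finset.sum_le_sum (fun i _ => (hxb i).1)
        have htot : ∑ i ∈ S, sortDesc x i + ∑ i ∈ Sᶜ, sortDesc x i = (n : ℝ) + t := by
          rw [Finset.sum_add_sum_compl, sum_sortDesc, hsumx]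
        nlinarith [hcompl, htot]
      have h2 : ∑ i ∈ S, y i = (t : ℝ) + (min k n : ℝ) := by
        rw [hS, hsy k]
        have e2 : min (min k a) n = a := by omega
        rw [e2, if_pos hka]
        push_cast [ht]
        ring
      rw [h2]
      exact h1
end

section
/- (Lemma 3.5, sequence form.) Let k ≥ 3 and m ≥ 2 be integers, n = m(k − 1) + 1, and write m − 1 = 3a + r with a ≥ 0 and r ∈ {0, 1, 2}. Let (d₁, …, dₙ) be any n-tuple of integers with 1 ≤ dᵢ ≤ 4 for all i and Σᵢ dᵢ = km, and set δᵢ = dᵢ(k − 1). Then Σᵢ δᵢ·log₂ δᵢ ≤ a(4k − 4)·log₂(4k − 4) + (r + 1)(k − 1)·log₂((r + 1)(k − 1)) + (n − a − 1)(k − 1)·log₂(k − 1), with equality if and only if (d₁, …, dₙ) is a permutation of the tuple consisting of a entries equal to 4, one entry equal to r + 1, and n − a − 1 entries equal to 1. -/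
open Finset

set_option maxHeartbeats 1000000


private theorem keyaux (A2 A3 A4 : ℝ) (h3 : 2*A2 < A3) (h43 : 2*A3 < A2 + A4)
    (a t2 t3 : ℕ) (ht2 : t2 ≤ 1) (ht3 : t3 ≤ 1) (ht23 : t2 = 0 ∨ t3 = 0)
    (c2 c3 c4 : ℕ) (hc : c2 + 2*c3 + 3*c4 = t2 + 2*t3 + 3*a) :
    ((c2:ℝ)*A2 + c3*A3 + c4*A4 ≤ (t2:ℝ)*A2 + t3*A3 + a*A4) ∧
    (((c2:ℝ)*A2 + c3*A3 + c4*A4 = (t2:ℝ)*A2 + t3*A3 + a*A4) ↔ (c2 = t2 ∧ c3 = t3 ∧ c4 = a)) := by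
  have h4 : A2 + A3 < A4 := by linarith
  by_cases hb2 : 2 ≤ c2
  · obtain ⟨x, rfl⟩ := Nat.exists_eq_add_of_le hb2
    have hrec := keyaux A2 A3 A4 h3 h43 a t2 t3 ht2 ht3 ht23 x (c3+1) c4 (by omega)
    have hlt : ((2+x : ℕ):ℝ)*A2 + c3*A3 + c4*A4 < (t2:ℝ)*A2 + t3*A3 + a*A4 := by
      have h1 := hrec.1
      push_cast at h1 ⊢
      linarith
    exact ⟨hlt.le, ⟨fun h => absurd h hlt.ne, fun h => by obtain ⟨e1, e2, e3⟩ := h; exfalso; omega⟩⟩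
  · by_cases hb3 : 2 ≤ c3
    · obtain ⟨y, rfl⟩ := Nat.exists_eq_add_of_le hb3
      have hrec := keyaux A2 A3 A4 h3 h43 a t2 t3 ht2 ht3 ht23 (c2+1) y (c4+1) (by omega)
      have hlt : (c2:ℝ)*A2 + ((2+y : ℕ):ℝ)*A3 + c4*A4 < (t2:ℝ)*A2 + t3*A3 + a*A4 := by
        have h1 := hrec.1
        push_cast at h1 ⊢
        linarith
      exact ⟨hlt.le, ⟨fun h => absurd h hlt.ne, fun h => by obtain ⟨e1, e2, e3⟩ := h; exfalso; omega⟩⟩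
    · by_cases hb23 : c2 = 1 ∧ c3 = 1
      · obtain ⟨rfl, rfl⟩ := hb23
        have hrec := keyaux A2 A3 A4 h3 h43 a t2 t3 ht2 ht3 ht23 0 0 (c4+1) (by omega)
        have hlt : ((1:ℕ):ℝ)*A2 + ((1:ℕ):ℝ)*A3 + c4*A4 < (t2:ℝ)*A2 + t3*A3 + a*A4 := by
          have h1 := hrec.1
          push_cast at h1 ⊢
          linarith
        exact ⟨hlt.le, ⟨fun h => absurd h hlt.ne, fun h => by obtain ⟨e1, e2, e3⟩ := h; exfalso; omega⟩⟩
      · have hts : c2 = t2 ∧ c3 = t3 ∧ c4 = a := by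
          rcases (by omega : c2 = 0 ∨ c2 = 1) with rfl | rfl <;>
            rcases (by omega : c3 = 0 ∨ c3 = 1) with rfl | rfl <;>
            rcases (by omega : t2 = 0 ∨ t2 = 1) with rfl | rfl <;>
            rcases (by omega : t3 = 0 ∨ t3 = 1) with rfl | rfl <;>
            refine ⟨?_, ?_, ?_⟩ <;> omega
        obtain ⟨rfl, rfl, rfl⟩ := hts
        exact ⟨le_refl _, by simp⟩
termination_by 2*c2 + 3*c3
decreasing_by all_goals omega

open Finset

set_option maxHeartbeats 1000000

private lemma sum_range_T (a u v : ℕ) :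
    ∀ n, a < n → (∑ i ∈ Finset.range n,
        if (if i < a then 4 else if i = a then u else 1) = v then 1 else 0) =
      (if v = 4 then a else 0) + (if v = u then 1 else 0) +
        (if v = 1 then n - a - 1 else 0) := by
  intro n
  induction n with
  | zero => intro h; exact absurd h (Nat.not_lt_zero a)
  | succ n ih =>
    intro h
    rw [Finset.sum_range_succ]
    rcases Nat.lt_or_ge a n with h1 | h1
    · rw [ih h1]
      have e1 : ¬ (n < a) := by omega
      have e2 : ¬ (n = a) := by omega
      rw [if_neg e1, if_neg e2]
      split_ifs <;> first | contradiction | omega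
    · have ha : a = n := by omega
      subst ha
      have hsum1 : (∑ i ∈ Finset.range a,
          if (if i < a then 4 else if i = a then u else 1) = v then 1 else 0) =
          (if v = 4 then a else 0) := by
        calc (∑ i ∈ Finset.range a,
              if (if i < a then 4 else if i = a then u else 1) = v then 1 else 0)
            = ∑ _i ∈ Finset.range a, (if 4 = v then 1 else 0) := by
              refine Finset.sum_congr rfl fun i hi => ?_
              rw [if_pos (Finset.mem_range.mp hi)]
          _ = a * (if 4 = v then 1 else 0) := by
              rw [Finset.sum_const, smul_eq_mul, Finset.card_range]
          _ = if v = 4 then a else 0 := by split_ifs <;> first | contradiction | omega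
      rw [hsum1, if_neg (lt_irrefl a), if_pos rfl]
      split_ifs <;> first | contradiction | omega

private lemma count_val_T {n : ℕ} (a u : ℕ) (han : a < n) (v : ℕ) :
    ((Finset.univ : Finset (Fin n)).filter
        (fun j : Fin n => (if (j : ℕ) < a then 4 else if (j : ℕ) = a then u else 1) = v)).card =
      (if v = 4 then a else 0) + (if v = u then 1 else 0) +
        (if v = 1 then n - a - 1 else 0) := by
  rw [Finset.card_filter]
  rw [Fin.sum_univ_eq_sum_range
    (fun i => if (if i < a then 4 else if i = a then u else 1) = v then 1 else 0) n]
  exact sum_range_T a u v n han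

private lemma fiber_sum {n : ℕ} (d : Fin n → ℕ) (hd : ∀ i, d i ≤ 4)
    {M : Type*} [AddCommMonoid M] (f : ℕ → M) :
    ∑ i, f (d i) = ∑ v ∈ Finset.range 5,
      ((Finset.univ.filter (fun i => d i = v)).card) • f v := by
  rw [← Finset.sum_fiberwise_of_maps_to (t := Finset.range 5) (g := d)
    (fun i _ => Finset.mem_range.mpr (Nat.lt_succ_of_le (hd i)))
    (fun i => f (d i))]
  refine Finset.sum_congr rfl fun v _ => ?_
  calc (∑ i ∈ Finset.univ.filter (fun i => d i = v), f (d i))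
      = ∑ i ∈ Finset.univ.filter (fun i => d i = v), f v := by
        refine Finset.sum_congr rfl fun i hi => ?_
        rw [(Finset.mem_filter.mp hi).2]
    _ = _ := Finset.sum_const _

private lemma perm_count {n : ℕ} (d T : Fin n → ℕ) :
    (∃ σ : Equiv.Perm (Fin n), ∀ i, d i = T (σ i)) ↔
    ∀ v, (Finset.univ.filter fun i => d i = v).card
        = (Finset.univ.filter fun j => T j = v).card := by
  constructor
  · rintro ⟨σ, hσ⟩ v
    refine Finset.card_bij (fun i _ => σ i) ?_ ?_ ?_
    · intro i hi
      simp only [Finset.mem_filter, Finset.mem_univ, true_and] at hi ⊢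
      rw [← hσ i]; exact hi
    · intro i _ j _ h
      exact σ.injective h
    · intro j hj
      simp only [Finset.mem_filter, Finset.mem_univ, true_and] at hj ⊢
      exact ⟨σ.symm j, by rw [hσ (σ.symm j), Equiv.apply_symm_apply]; exact hj,
        Equiv.apply_symm_apply σ j⟩
  · intro hv
    have hcard : ∀ v, Fintype.card {i // d i = v} = Fintype.card {j // T j = v} := by
      intro v
      rw [Fintype.card_subtype, Fintype.card_subtype]
      exact hv v
    exact ⟨Equiv.ofFiberEquiv (f := d) (g := T) (fun v => Fintype.equivOfCardEq (hcard v)),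
      fun i => (Equiv.ofFiberEquiv_map _ i).symm⟩



/-- Lemma 3.5, sequence form: among chemical `k`-uniform hypertree degree sequences
(`n = m(k-1)+1` integers `1 ≤ dᵢ ≤ 4` with `Σ dᵢ = km`, Laplacian degrees
`δᵢ = dᵢ(k-1)`) with `m - 1 = 3a + r`, `r ∈ {0,1,2}`, one has
`Σ δᵢ log₂ δᵢ ≤ a(4k-4)log₂(4k-4) + (r+1)(k-1)log₂((r+1)(k-1)) + (n-a-1)(k-1)log₂(k-1)`,
with equality iff `(d₁, …, dₙ)` is a permutation of the tuple with `a` entries `4`,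
one entry `r + 1`, and `n - a - 1` entries `1`. -/
theorem stmt_13 (k m n a r : ℕ) (hk : 3 ≤ k) (hm : 2 ≤ m) (hn : n = m * (k - 1) + 1)
    (hr : r ≤ 2) (hmar : m - 1 = 3 * a + r)
    (d : Fin n → ℕ) (hd : ∀ i, 1 ≤ d i ∧ d i ≤ 4) (hsum : ∑ i, d i = k * m)
    (δ : Fin n → ℝ) (hδ : ∀ i, δ i = (d i : ℝ) * ((k : ℝ) - 1)) :
    (∑ i, δ i * Real.logb 2 (δ i) ≤
      (a : ℝ) * (4 * (k : ℝ) - 4) * Real.logb 2 (4 * (k : ℝ) - 4) +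
        ((r : ℝ) + 1) * ((k : ℝ) - 1) * Real.logb 2 (((r : ℝ) + 1) * ((k : ℝ) - 1)) +
        ((n : ℝ) - (a : ℝ) - 1) * ((k : ℝ) - 1) * Real.logb 2 ((k : ℝ) - 1)) ∧
    (∑ i, δ i * Real.logb 2 (δ i) =
        (a : ℝ) * (4 * (k : ℝ) - 4) * Real.logb 2 (4 * (k : ℝ) - 4) +
          ((r : ℝ) + 1) * ((k : ℝ) - 1) * Real.logb 2 (((r : ℝ) + 1) * ((k : ℝ) - 1)) +
          ((n : ℝ) - (a : ℝ) - 1) * ((k : ℝ) - 1) * Real.logb 2 ((k : ℝ) - 1) ↔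
      ∃ σ : Equiv.Perm (Fin n), ∀ i,
        d i = if ((σ i : Fin n) : ℕ) < a then 4 else if ((σ i : Fin n) : ℕ) = a then r + 1 else 1) := by
  have hkR : (3:ℝ) ≤ (k:ℝ) := by exact_mod_cast hk
  set K : ℝ := (k:ℝ) - 1 with hK
  have hK2 : (2:ℝ) ≤ K := by rw [hK]; linarith
  have hK0 : (0:ℝ) < K := by linarith
  set G : ℕ → ℝ := fun v => (v:ℝ) * K * Real.logb 2 ((v:ℝ) * K) with hGdef
  have hGv : ∀ v : ℕ, G v = (v:ℝ) * K * Real.logb 2 ((v:ℝ) * K) := fun v => rfl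
  have hG1 : G 1 = K * Real.logb 2 K := by rw [hGv]; norm_num
  have hG2 : G 2 = 2*K * Real.logb 2 (2*K) := by rw [hGv]; norm_num
  have hG3 : G 3 = 3*K * Real.logb 2 (3*K) := by rw [hGv]; norm_num
  have hG4 : G 4 = 4*K * Real.logb 2 (4*K) := by rw [hGv]; norm_num
  have L2 : (0:ℝ) < Real.log 2 := Real.log_pos (by norm_num)
  have hmid : ∀ x z : ℝ, 0 ≤ x → 0 < z →
      2*((x+z) * Real.log (x+z)) < x * Real.log x + (x+2*z) * Real.log (x+2*z) := by
    intro x z hx hz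
    have hxy : x ≠ x + 2*z := by intro h; nlinarith
    have h := Real.strictConvexOn_mul_log.2 (Set.mem_Ici.mpr hx)
      (Set.mem_Ici.mpr (by linarith : (0:ℝ) ≤ x + 2*z)) hxy
      (by norm_num : (0:ℝ) < 1/2) (by norm_num : (0:ℝ) < 1/2) (by norm_num)
    simp only [smul_eq_mul] at h
    have e : (1/2)*x + (1/2)*(x+2*z) = x + z := by ring
    rw [e] at h
    linarith
  have hlogb : ∀ x : ℝ, x * Real.logb 2 x * Real.log 2 = x * Real.log x := by
    intro x
    rw [Real.logb]
    field_simp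
  have hC1 : 2 * G 2 < G 1 + G 3 := by
    have h := hmid K K (le_of_lt hK0) hK0
    have eK : K + K = 2*K := by ring
    have eK2 : K + 2*K = 3*K := by ring
    rw [eK, eK2] at h
    refine lt_of_mul_lt_mul_right ?_ (le_of_lt L2)
    rw [hG1, hG2, hG3]
    nlinarith [hlogb K, hlogb (2*K), hlogb (3*K)]
  have hC2 : 2 * G 3 < G 2 + G 4 := by
    have h := hmid (2*K) K (by linarith) hK0
    have eK : 2*K + K = 3*K := by ring
    have eK2 : 2*K + 2*K = 4*K := by ring
    rw [eK, eK2] at h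
    refine lt_of_mul_lt_mul_right ?_ (le_of_lt L2)
    rw [hG2, hG3, hG4]
    nlinarith [hlogb (2*K), hlogb (3*K), hlogb (4*K)]
  have h3 : 2*(G 2 - G 1) < G 3 - G 1 := by linarith
  have h43 : 2*(G 3 - G 1) < (G 2 - G 1) + (G 4 - G 1) := by linarith
  -- counts
  have hdle : ∀ i, d i ≤ 4 := fun i => (hd i).2
  have hfib1 := fiber_sum d hdle (fun _ => (1:ℕ))
  have hfib2 := fiber_sum d hdle (fun v => v)
  have hfibG := fiber_sum d hdle G
  simp only [Finset.sum_range_succ, Finset.sum_range_zero, smul_eq_mul, nsmul_eq_mul,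
    mul_one, Finset.sum_const, Finset.card_univ, Fintype.card_fin, zero_add] at hfib1 hfib2 hfibG
  rw [hsum] at hfib2
  have hc0 : (Finset.univ.filter fun i => d i = 0).card = 0 := by
    rw [Finset.card_eq_zero, Finset.filter_eq_empty_iff]
    intro i _
    have := (hd i).1
    omega
  have hcbig : ∀ w, 5 ≤ w → (Finset.univ.filter fun i => d i = w).card = 0 := by
    intro w hw
    rw [Finset.card_eq_zero, Finset.filter_eq_empty_iff]
    intro i _
    have := (hd i).2
    omega
  have hkm : k*m = m*(k-1) + m := by
    calc k*m = m*k := Nat.mul_comm k m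
    _ = m*(k-1+1) := by rw [Nat.sub_add_cancel (by omega : 1 ≤ k)]
    _ = m*(k-1) + m := by rw [Nat.mul_add, Nat.mul_one]
  have hmn : 2*m ≤ m*(k-1) := by
    calc 2*m = m*2 := Nat.mul_comm 2 m
    _ ≤ m*(k-1) := Nat.mul_le_mul (le_refl m) (by omega)
  have han : a < n := by omega
  obtain ⟨t2, t3, ht2, ht3, ht23, htr, hGr⟩ :
      ∃ t2 t3 : ℕ, t2 ≤ 1 ∧ t3 ≤ 1 ∧ (t2 = 0 ∨ t3 = 0) ∧ t2 + 2*t3 = r ∧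
        G (r+1) = G 1 + (t2:ℝ)*(G 2 - G 1) + (t3:ℝ)*(G 3 - G 1) := by
    interval_cases r
    · exact ⟨0, 0, by norm_num, by norm_num, Or.inl rfl, by norm_num, by norm_num⟩
    · exact ⟨1, 0, le_refl 1, by norm_num, Or.inr rfl, by norm_num, by push_cast; ring_nf⟩
    · exact ⟨0, 1, by norm_num, le_refl 1, Or.inl rfl, by norm_num, by push_cast; ring_nf⟩
  have hc_key : (Finset.univ.filter fun i => d i = 2).card
      + 2*(Finset.univ.filter fun i => d i = 3).card
      + 3*(Finset.univ.filter fun i => d i = 4).card = t2 + 2*t3 + 3*a := by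
    omega
  have hdelta : ∑ i, δ i * Real.logb 2 (δ i) = ∑ i, G (d i) := by
    refine Finset.sum_congr rfl fun i _ => ?_
    rw [hδ i, hGv]
  have hc1R : ((Finset.univ.filter fun i => d i = 1).card : ℝ)
      = (n:ℝ) - (Finset.univ.filter fun i => d i = 2).card
        - (Finset.univ.filter fun i => d i = 3).card
        - (Finset.univ.filter fun i => d i = 4).card := by
    have h := hfib1
    have h2 : (Finset.univ.filter fun i => d i = 1).card
        + (Finset.univ.filter fun i => d i = 2).card
        + (Finset.univ.filter fun i => d i = 3).card
        + (Finset.univ.filter fun i => d i = 4).card = n := by omega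
    have h3 := congrArg (Nat.cast : ℕ → ℝ) h2
    push_cast at h3
    linarith
  have hLHS : ∑ i, δ i * Real.logb 2 (δ i)
      = (n:ℝ) * G 1 + (((Finset.univ.filter fun i => d i = 2).card : ℝ)*(G 2 - G 1)
        + ((Finset.univ.filter fun i => d i = 3).card : ℝ)*(G 3 - G 1)
        + ((Finset.univ.filter fun i => d i = 4).card : ℝ)*(G 4 - G 1)) := by
    rw [hdelta, hfibG, hc0, hc1R]
    push_cast
    ring
  have h4K : 4*(k:ℝ) - 4 = 4*K := by rw [hK]; ring
  have hrc : ((r:ℝ)+1) = ((r+1 : ℕ) : ℝ) := by push_cast; ring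
  have hRHS : (a:ℝ)*(4*(k:ℝ)-4)*Real.logb 2 (4*(k:ℝ)-4)
        + ((r:ℝ)+1)*K*Real.logb 2 (((r:ℝ)+1)*K)
        + ((n:ℝ)-(a:ℝ)-1)*K*Real.logb 2 K
      = (n:ℝ)*G 1 + ((t2:ℝ)*(G 2 - G 1) + (t3:ℝ)*(G 3 - G 1) + (a:ℝ)*(G 4 - G 1)) := by
    rw [h4K, hrc, ← hGv (r+1), hGr, hG1, hG2, hG3, hG4]
    ring
  have hkey := keyaux (G 2 - G 1) (G 3 - G 1) (G 4 - G 1) h3 h43 a t2 t3 ht2 ht3 ht23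
    (Finset.univ.filter fun i => d i = 2).card
    (Finset.univ.filter fun i => d i = 3).card
    (Finset.univ.filter fun i => d i = 4).card hc_key
  constructor
  · rw [hLHS, hRHS]
    linarith [hkey.1]
  · rw [hLHS, hRHS]
    constructor
    · intro h
      have hXY := hkey.2.mp (by linarith)
      obtain ⟨e2, e3, e4⟩ := hXY
      have hcnt : ∀ v, (Finset.univ.filter fun i => d i = v).card
          = (Finset.univ.filter (fun j : Fin n =>
              (if (j:ℕ) < a then 4 else if (j:ℕ) = a then r+1 else 1) = v)).card := by
        intro v
        rw [count_val_T a (r+1) han v]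
        by_cases h0 : v = 0
        · subst h0; rw [hc0]; split_ifs <;> first | contradiction | omega
        by_cases h1 : v = 1
        · subst h1; split_ifs <;> first | contradiction | omega
        by_cases hv2 : v = 2
        · subst hv2; split_ifs <;> first | contradiction | omega
        by_cases hv3 : v = 3
        · subst hv3; split_ifs <;> first | contradiction | omega
        by_cases hv4 : v = 4
        · subst hv4; split_ifs <;> first | contradiction | omega
        · rw [hcbig v (by omega)]; split_ifs <;> first | contradiction | omega
      obtain ⟨σ, hσ⟩ := (perm_count d (fun j : Fin n =>
        if (j:ℕ) < a then 4 else if (j:ℕ) = a then r+1 else 1)).mpr hcnt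
      exact ⟨σ, fun i => hσ i⟩
    · rintro ⟨σ, hσ⟩
      have hcnt := (perm_count d (fun j : Fin n =>
        if (j:ℕ) < a then 4 else if (j:ℕ) = a then r+1 else 1)).mp ⟨σ, fun i => hσ i⟩
      have e2 : (Finset.univ.filter fun i => d i = 2).card = t2 := by
        have h := hcnt 2
        rw [count_val_T a (r+1) han 2] at h
        split_ifs at h <;> first | contradiction | omega
      have e3 : (Finset.univ.filter fun i => d i = 3).card = t3 := by
        have h := hcnt 3
        rw [count_val_T a (r+1) han 3] at h
        split_ifs at h <;> first | contradiction | omega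
      have e4 : (Finset.univ.filter fun i => d i = 4).card = a := by
        have h := hcnt 4
        rw [count_val_T a (r+1) han 4] at h
        split_ifs at h <;> first | contradiction | omega
      have := hkey.2.mpr ⟨e2, e3, e4⟩
      linarith
end

section
/- (Theorem 3.1, combined h-form.) Let k ≥ 3 and m ≥ 2 be integers and n = m(k − 1) + 1. For every n-tuple (d₁, …, dₙ) of positive integers with Σᵢ dᵢ = km, setting δᵢ = dᵢ(k − 1) and h = Σᵢ δᵢ·log₂ δᵢ, one has (m − 1)(2k − 2)·log₂(2k − 2) + (n − m + 1)(k − 1)·log₂(k − 1) ≤ h ≤ m(k − 1)·log₂(m(k − 1)) + (n − 1)(k − 1)·log₂(k − 1). -/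
open Real Finset

lemma lemA (d : ℕ) (hd : 1 ≤ d) : 2 * ((d : ℝ) - 1) ≤ (d : ℝ) * Real.logb 2 d := by
  have hlog2 : Real.logb 2 2 = 1 := Real.logb_self_eq_one (by norm_num)
  rcases lt_or_ge d 4 with h4 | h4
  · interval_cases d
    · norm_num
    · push_cast; rw [hlog2]; norm_num
    · -- 4 ≤ 3 logb 2 3  ⟺ 4 log 2 ≤ 3 log 3 ⟺ log 16 ≤ log 27
      have hl2 : (0:ℝ) < Real.log 2 := Real.log_pos (by norm_num)
      have h16 : Real.log 16 ≤ Real.log 27 := Real.log_le_log (by norm_num) (by norm_num)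
      have e1 : Real.log 16 = 4 * Real.log 2 := by
        rw [show (16:ℝ) = 2 ^ (4:ℕ) by norm_num, Real.log_pow]; norm_num
      have e2 : Real.log 27 = 3 * Real.log 3 := by
        rw [show (27:ℝ) = 3 ^ (3:ℕ) by norm_num, Real.log_pow]; norm_num
      push_cast
      rw [Real.logb, div_eq_mul_inv]
      have : 4 * Real.log 2 ≤ 3 * Real.log 3 := by rw [← e1, ← e2]; exact h16
      rw [show (3:ℝ) * (Real.log 3 * (Real.log 2)⁻¹) = (3 * Real.log 3) / Real.log 2 by ring]
      rw [le_div_iff₀ hl2]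
      linarith
  · have h2 : (2:ℝ) ≤ Real.logb 2 d := by
      have : Real.logb 2 4 ≤ Real.logb 2 d :=
        Real.logb_le_logb_of_le (by norm_num) (by norm_num) (by exact_mod_cast h4)
      have e : Real.logb 2 4 = 2 := by
        rw [show (4:ℝ) = 2 ^ (2:ℕ) by norm_num, Real.logb_pow, hlog2]; norm_num
      linarith
    have hd4 : (4:ℝ) ≤ (d:ℝ) := by exact_mod_cast h4
    nlinarith

lemma lemB (M : ℝ) (hM : 2 ≤ M) (x : ℝ) (h1 : 1 ≤ x) (h2 : x ≤ M) :
    (M - 1) * (x * Real.logb 2 x) ≤ (x - 1) * (M * Real.logb 2 M) := by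
  have hl2 : (0:ℝ) < Real.log 2 := Real.log_pos (by norm_num)
  have key : (M - 1) * (x * Real.log x) ≤ (x - 1) * (M * Real.log M) := by
    have hc := Real.convexOn_mul_log
    have hM1 : (0:ℝ) < M - 1 := by linarith
    have hab : (M - x) / (M - 1) + (x - 1) / (M - 1) = 1 := by field_simp; ring
    have h := hc.2 (Set.mem_Ici.2 (by norm_num : (0:ℝ) ≤ 1)) (Set.mem_Ici.2 (by linarith : (0:ℝ) ≤ M))
      (div_nonneg (by linarith : (0:ℝ) ≤ M - x) (by linarith : (0:ℝ) ≤ M - 1))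
      (div_nonneg (by linarith : (0:ℝ) ≤ x - 1) (by linarith : (0:ℝ) ≤ M - 1)) hab
    simp only [smul_eq_mul] at h
    have hx : (M - x) / (M - 1) * 1 + (x - 1) / (M - 1) * M = x := by field_simp; ring
    rw [hx] at h
    simp only [Real.log_one, mul_zero, mul_one] at h
    have : x * Real.log x ≤ (x - 1) / (M - 1) * (M * Real.log M) := by linarith [h]
    calc (M - 1) * (x * Real.log x) ≤ (M - 1) * ((x - 1) / (M - 1) * (M * Real.log M)) := by
          apply mul_le_mul_of_nonneg_left this (by linarith)
      _ = (x - 1) * (M * Real.log M) := by field_simp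
  simp only [Real.logb, div_eq_mul_inv]
  have hinv : (0:ℝ) ≤ (Real.log 2)⁻¹ := by positivity
  calc (M - 1) * (x * (Real.log x * (Real.log 2)⁻¹))
      = ((M - 1) * (x * Real.log x)) * (Real.log 2)⁻¹ := by ring
    _ ≤ ((x - 1) * (M * Real.log M)) * (Real.log 2)⁻¹ := by
        apply mul_le_mul_of_nonneg_right key hinv
    _ = (x - 1) * (M * (Real.log M * (Real.log 2)⁻¹)) := by ring

/-- Theorem 3.1, combined `h`-form: for every `k`-uniform hypertree degree sequence
(`n = m(k-1)+1` positive integers `dᵢ` with `Σ dᵢ = km`, Laplacian degrees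
`δᵢ = dᵢ(k-1)`), the quantity `h = Σ δᵢ log₂ δᵢ` satisfies
`(m-1)(2k-2)log₂(2k-2) + (n-m+1)(k-1)log₂(k-1) ≤ h ≤
m(k-1)log₂(m(k-1)) + (n-1)(k-1)log₂(k-1)`. -/
theorem stmt_15 (k m n : ℕ) (hk : 3 ≤ k) (hm : 2 ≤ m) (hn : n = m * (k - 1) + 1)
    (d : Fin n → ℕ) (hd : ∀ i, 1 ≤ d i) (hsum : ∑ i, d i = k * m)
    (δ : Fin n → ℝ) (hδ : ∀ i, δ i = (d i : ℝ) * ((k : ℝ) - 1)) :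
    ((m : ℝ) - 1) * (2 * (k : ℝ) - 2) * Real.logb 2 (2 * (k : ℝ) - 2) +
        ((n : ℝ) - (m : ℝ) + 1) * ((k : ℝ) - 1) * Real.logb 2 ((k : ℝ) - 1) ≤
      ∑ i, δ i * Real.logb 2 (δ i) ∧
    ∑ i, δ i * Real.logb 2 (δ i) ≤
      (m : ℝ) * ((k : ℝ) - 1) * Real.logb 2 ((m : ℝ) * ((k : ℝ) - 1)) +
        ((n : ℝ) - 1) * ((k : ℝ) - 1) * Real.logb 2 ((k : ℝ) - 1) := by
  have hK3 : (3:ℝ) ≤ (k:ℝ) := by exact_mod_cast hk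
  have hM2 : (2:ℝ) ≤ (m:ℝ) := by exact_mod_cast hm
  have hKpos : (0:ℝ) ≤ (k:ℝ) - 1 := by linarith
  have hk1 : 1 ≤ k := by omega
  have hne : (n:ℝ) = (m:ℝ) * ((k:ℝ) - 1) + 1 := by
    rw [hn]; push_cast [hk1]; ring
  set L := Real.logb 2 ((k:ℝ) - 1) with hL
  have hsumR : ∑ i, (d i : ℝ) = (k:ℝ) * m := by
    exact_mod_cast congrArg (Nat.cast (R := ℝ)) hsum
  have hH : ∑ i, δ i * Real.logb 2 (δ i)
      = ((k:ℝ)-1) * (∑ i, (d i:ℝ) * Real.logb 2 (d i)) + ((k:ℝ)-1) * L * ((k:ℝ)*m) := by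
    have step : ∀ i : Fin n, δ i * Real.logb 2 (δ i)
        = ((k:ℝ)-1) * ((d i:ℝ) * Real.logb 2 (d i)) + ((k:ℝ)-1) * L * (d i) := by
      intro i
      have hdne : ((d i : ℝ)) ≠ 0 := by
        have := hd i; positivity
      rw [hδ i, Real.logb_mul hdne (by linarith : ((k:ℝ)-1) ≠ 0), hL]
      ring
    rw [Finset.sum_congr rfl (fun i _ => step i), Finset.sum_add_distrib,
      ← Finset.mul_sum, ← Finset.mul_sum, hsumR]
  set S := ∑ i, (d i:ℝ) * Real.logb 2 (d i) with hS
  have hSlow : 2 * ((m:ℝ) - 1) ≤ S := by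
    have h1 : ∑ i, (2*((d i:ℝ)-1)) ≤ S :=
      Finset.sum_le_sum fun i _ => lemA (d i) (hd i)
    have e : ∑ i, (2*((d i:ℝ)-1)) = 2*((k:ℝ)*m) - 2*n := by
      rw [show (fun i : Fin n => 2*((d i:ℝ)-1)) = (fun i : Fin n => 2*(d i:ℝ) - 2) by
        funext i; ring]
      rw [Finset.sum_sub_distrib, ← Finset.mul_sum, hsumR, Finset.sum_const,
        Finset.card_univ, Fintype.card_fin]
      push_cast; ring
    have e2 : 2*((k:ℝ)*m) - 2*(n:ℝ) = 2*((m:ℝ)-1) := by rw [hne]; ring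
    linarith
  have hdle : ∀ i, d i ≤ m := by
    intro i
    have h1 : (Finset.univ.erase i).card ≤ ∑ j ∈ Finset.univ.erase i, d j := by
      calc (Finset.univ.erase i).card = ∑ j ∈ Finset.univ.erase i, 1 := by
            rw [Finset.card_eq_sum_ones]
        _ ≤ ∑ j ∈ Finset.univ.erase i, d j := Finset.sum_le_sum fun j _ => hd j
    have h2 : d i + ∑ j ∈ Finset.univ.erase i, d j = k*m := by
      rw [Finset.add_sum_erase _ d (Finset.mem_univ i), hsum]
    have h3 : (Finset.univ.erase i).card = n - 1 := by
      rw [Finset.card_erase_of_mem (Finset.mem_univ i), Finset.card_univ, Fintype.card_fin]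
    have hkm : k*m = (n-1) + m := by
      have hn1 : n - 1 = m * (k-1) := by omega
      rw [hn1]
      calc k*m = (k-1+1)*m := by rw [Nat.sub_add_cancel hk1]
        _ = m*(k-1)+m := by ring
    rw [h3] at h1
    omega
  have hSup : S ≤ (m:ℝ) * Real.logb 2 m := by
    have esub : ∑ i, ((d i:ℝ) - 1) = (m:ℝ) - 1 := by
      rw [Finset.sum_sub_distrib, hsumR, Finset.sum_const, Finset.card_univ,
        Fintype.card_fin, nsmul_eq_mul, mul_one]
      rw [hne]; ring
    have h1 : ((m:ℝ)-1) * S ≤ ((m:ℝ)-1) * ((m:ℝ)*Real.logb 2 m) := by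
      calc ((m:ℝ)-1)*S = ∑ i, ((m:ℝ)-1) * ((d i:ℝ)*Real.logb 2 (d i)) := Finset.mul_sum ..
        _ ≤ ∑ i, ((d i:ℝ)-1) * ((m:ℝ)*Real.logb 2 m) := by
            refine Finset.sum_le_sum fun i _ => lemB (m:ℝ) hM2 (d i) ?_ ?_
            · exact_mod_cast hd i
            · exact_mod_cast hdle i
        _ = (∑ i, ((d i:ℝ)-1)) * ((m:ℝ)*Real.logb 2 m) := (Finset.sum_mul ..).symm
        _ = ((m:ℝ)-1) * ((m:ℝ)*Real.logb 2 m) := by rw [esub]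
    exact le_of_mul_le_mul_left h1 (by linarith)
  constructor
  · rw [hH]
    have hlog22 : Real.logb 2 (2*(k:ℝ)-2) = 1 + L := by
      rw [show 2*(k:ℝ)-2 = 2*((k:ℝ)-1) by ring,
        Real.logb_mul two_ne_zero (by linarith : ((k:ℝ)-1) ≠ 0),
        Real.logb_self_eq_one (by norm_num), hL]
    rw [hlog22, hne]
    have hkey : ((m:ℝ)-1)*(2*(k:ℝ)-2)*(1+L)
        + ((m:ℝ)*((k:ℝ)-1)+1 - (m:ℝ) + 1)*((k:ℝ)-1)*L
        = ((k:ℝ)-1)*(2*((m:ℝ)-1)) + ((k:ℝ)-1)*L*((k:ℝ)*m) := by ring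
    rw [hkey]
    have := mul_le_mul_of_nonneg_left hSlow hKpos
    linarith
  · rw [hH]
    have hlogm : Real.logb 2 ((m:ℝ)*((k:ℝ)-1)) = Real.logb 2 m + L := by
      rw [Real.logb_mul (by linarith : (m:ℝ) ≠ 0) (by linarith : ((k:ℝ)-1) ≠ 0), hL]
    rw [hlogm, hne]
    have := mul_le_mul_of_nonneg_left hSup hKpos
    nlinarith [this]
end
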